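/- arXiv:2306.04088 — 3 statements merged into one kernel-verified Lean document; each statement's English description precedes it below -/
import Mathlib

section
/- For every prime p there exists a prime labeling of the ladder P_2 × P_{2p} in which the two vertices of the final column (the vertices (1,2p) and (2,2p)) receive the labels 1 and 4p. -/
/-- The ladder graph `L n = P_2 × P_n` on vertex set `Fin 2 × Fin n`:
`(i,j)` and `(i',j')` are adjacent iff they differ by one in exactly one coordinate. -/
def Ladder (n : ℕ) : SimpleGraph (Fin 2 × Fin n) where
  Adj u v := (u.1 = v.1 ∧ ((u.2 : ℕ) + 1 = (v.2 : ℕ) ∨ (v.2 : ℕ) + 1 = (u.2 : ℕ))) ∨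
    (u.2 = v.2 ∧ u.1 ≠ v.1)
  symm := by
    constructor
    rintro u v (⟨h1, h2⟩ | ⟨h1, h2⟩)
    · exact Or.inl ⟨h1.symm, h2.symm⟩
    · exact Or.inr ⟨h1.symm, h2.symm⟩
  loopless := by
    constructor
    rintro u (⟨h1, h2⟩ | ⟨h1, h2⟩)
    · omega
    · exact h2 rfl

/-- `L n` has a prime labeling: a bijection from its `2n` vertices to `{1, …, 2n}`
such that adjacent vertices receive coprime labels. -/
def HasPrimeLabeling (n : ℕ) : Prop :=
  ∃ f : (Fin 2 × Fin n) ≃ Fin (2 * n),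
    ∀ u v, (Ladder n).Adj u v → Nat.Coprime ((f u : ℕ) + 1) ((f v : ℕ) + 1)

/-! ### Auxiliary coprimality lemmas -/

private lemma pfst {α β : Type*} (a : α) (b : β) : (Prod.mk a b).1 = a := rfl
private lemma psnd {α β : Type*} (a : α) (b : β) : (Prod.mk a b).2 = b := rfl

lemma copc (A B u v c : ℕ) (hc : 0 < c)
    (heq : u*A = v*B + c ∨ v*B = u*A + c)
    (h : ∀ q, 2 ≤ q → q ≤ c → q ∣ c → q ∣ A → q ∣ B → False) : Nat.Coprime A B := by
  by_contra hco
  obtain ⟨q, hq, hA, hB⟩ := Nat.Prime.not_coprime_iff_dvd.mp hco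
  have hqc : q ∣ c := by
    rcases heq with h1 | h1
    · have hd := Nat.dvd_sub (Dvd.dvd.mul_left hA u) (Dvd.dvd.mul_left hB v)
      rwa [h1, Nat.add_sub_cancel_left] at hd
    · have hd := Nat.dvd_sub (Dvd.dvd.mul_left hB v) (Dvd.dvd.mul_left hA u)
      rwa [h1, Nat.add_sub_cancel_left] at hd
  exact h q hq.two_le (Nat.le_of_dvd hc hqc) hqc hA hB

lemma cop_p_apart (p A B : ℕ) (hp : p.Prime) (hAB : A + p = B) (hA : ¬ p ∣ A) :
    Nat.Coprime A B := by
  by_contra hco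
  obtain ⟨q, hq, h1, h2⟩ := Nat.Prime.not_coprime_iff_dvd.mp hco
  have h3 : q ∣ p := by
    have h4 := Nat.dvd_sub h2 h1
    have h5 : B - A = p := by omega
    rwa [h5] at h4
  rw [Nat.prime_dvd_prime_iff_eq hq hp] at h3
  exact hA (h3 ▸ h1)

/-! ### The assembly lemma -/

lemma assemble (p : ℕ) (hp1 : 1 ≤ p) (O E : ℕ → ℕ)
    (hOodd : ∀ j < 2*p, O j % 2 = 1)
    (hEeven : ∀ j < 2*p, E j % 2 = 0)
    (hOr : ∀ j < 2*p, 1 ≤ O j ∧ O j ≤ 4*p)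
    (hEr : ∀ j < 2*p, 1 ≤ E j ∧ E j ≤ 4*p)
    (hOinj : ∀ j < 2*p, ∀ j' < 2*p, O j = O j' → j = j')
    (hEinj : ∀ j < 2*p, ∀ j' < 2*p, E j = E j' → j = j')
    (hCV : ∀ j < 2*p, Nat.Coprime (O j) (E j))
    (hCH1 : ∀ j, j + 2 ≤ 2*p → Nat.Coprime (O j) (E (j+1)))
    (hCH2 : ∀ j, j + 2 ≤ 2*p → Nat.Coprime (E j) (O (j+1)))
    (hlastO : O (2*p - 1) = 1) (hlastE : E (2*p - 1) = 4*p) :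
    ∃ f : (Fin 2 × Fin (2*p)) ≃ Fin (2*(2*p)),
      (∀ u v, (Ladder (2*p)).Adj u v → Nat.Coprime ((f u : ℕ) + 1) ((f v : ℕ) + 1)) ∧
      ∀ j : Fin (2*p), (j : ℕ) = 2*p - 1 →
        ({(f (0, j) : ℕ) + 1, (f (1, j) : ℕ) + 1} : Set ℕ) = {1, 4*p} := by
  classical
  set L : Fin 2 × Fin (2*p) → ℕ :=
    fun x => if ((x.1 : ℕ) + (x.2 : ℕ)) % 2 = 0 then O (x.2 : ℕ) else E (x.2 : ℕ) with hLdef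
  have hL1 : ∀ x, 1 ≤ L x ∧ L x ≤ 4*p := by
    intro x
    simp only [hLdef]
    split_ifs
    · exact hOr _ x.2.isLt
    · exact hEr _ x.2.isLt
  have hgdef : ∀ x : Fin 2 × Fin (2*p), L x - 1 < 2*(2*p) := by
    intro x; have := hL1 x; omega
  set g : Fin 2 × Fin (2*p) → Fin (2*(2*p)) := fun x => ⟨L x - 1, hgdef x⟩ with hgdef2
  have hginj : Function.Injective g := by
    intro a b hab
    have h1 : L a = L b := by
      have h2 : L a - 1 = L b - 1 := congrArg Fin.val hab
      have ha := (hL1 a).1; have hb := (hL1 b).1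
      omega
    have hja := a.2.isLt; have hjb := b.2.isLt
    have hia := a.1.isLt; have hib := b.1.isLt
    simp only [hLdef] at h1
    split_ifs at h1 with h2 h3 h3
    · have hj : (a.2 : ℕ) = (b.2 : ℕ) := hOinj _ a.2.isLt _ b.2.isLt h1
      have hi : (a.1 : ℕ) = (b.1 : ℕ) := by omega
      exact Prod.ext (Fin.ext hi) (Fin.ext hj)
    · have hoa := hOodd _ a.2.isLt; have heb := hEeven _ b.2.isLt; omega
    · have hea := hEeven _ a.2.isLt; have hob := hOodd _ b.2.isLt; omega
    · have hj : (a.2 : ℕ) = (b.2 : ℕ) := hEinj _ a.2.isLt _ b.2.isLt h1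
      have hi : (a.1 : ℕ) = (b.1 : ℕ) := by omega
      exact Prod.ext (Fin.ext hi) (Fin.ext hj)
  have hgbij : Function.Bijective g :=
    (Fintype.bijective_iff_injective_and_card g).mpr ⟨hginj, by simp⟩
  have hval : ∀ x : Fin 2 × Fin (2*p), ((Equiv.ofBijective g hgbij) x : ℕ) + 1 = L x := by
    intro x
    have := (hL1 x).1
    show L x - 1 + 1 = L x
    omega
  refine ⟨Equiv.ofBijective g hgbij, ?_, ?_⟩
  · rintro ⟨i, j⟩ ⟨i', j'⟩ h
    rw [hval, hval]
    have hjlt := j.isLt; have hjlt' := j'.isLt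
    have hilt := i.isLt; have hilt' := i'.isLt
    rcases h with ⟨h1, h2⟩ | ⟨h1, h2⟩
    · simp only [pfst, psnd] at h1 h2
      have hi : (i : ℕ) = (i' : ℕ) := congrArg Fin.val h1
      simp only [hLdef, pfst, psnd]
      rcases h2 with h2 | h2
      · by_cases hpar : ((i : ℕ) + (j : ℕ)) % 2 = 0
        · rw [if_pos hpar, if_neg (by omega)]
          rw [show ((j' : ℕ)) = (j : ℕ) + 1 from by omega]
          exact hCH1 _ (by omega)
        · rw [if_neg hpar, if_pos (by omega)]
          rw [show ((j' : ℕ)) = (j : ℕ) + 1 from by omega]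
          exact hCH2 _ (by omega)
      · by_cases hpar : ((i : ℕ) + (j : ℕ)) % 2 = 0
        · rw [if_pos hpar, if_neg (by omega)]
          rw [show ((j : ℕ)) = (j' : ℕ) + 1 from by omega]
          exact (hCH2 _ (by omega)).symm
        · rw [if_neg hpar, if_pos (by omega)]
          rw [show ((j : ℕ)) = (j' : ℕ) + 1 from by omega]
          exact (hCH1 _ (by omega)).symm
    · simp only [pfst, psnd] at h1 h2
      have hj : (j : ℕ) = (j' : ℕ) := congrArg Fin.val h1
      have hi : (i : ℕ) ≠ (i' : ℕ) := fun hc => h2 (Fin.ext hc)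
      simp only [hLdef, pfst, psnd]
      by_cases hpar : ((i : ℕ) + (j : ℕ)) % 2 = 0
      · rw [if_pos hpar, if_neg (by omega), ← hj]
        exact hCV _ j.isLt
      · rw [if_neg hpar, if_pos (by omega), ← hj]
        exact (hCV _ j.isLt).symm
  · intro j hj
    rw [hval, hval]
    have hz : ((0 : Fin 2) : ℕ) = 0 := rfl
    have ho : ((1 : Fin 2) : ℕ) = 1 := rfl
    have l0 : L (0, j) = 4*p := by
      simp only [hLdef, pfst, psnd]
      rw [if_neg (by rw [hz]; omega)]
      show E (j : ℕ) = 4*p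
      rw [hj, hlastE]
    have l1 : L (1, j) = 1 := by
      simp only [hLdef, pfst, psnd]
      rw [if_pos (by rw [ho]; omega)]
      show O (j : ℕ) = 1
      rw [hj, hlastO]
    rw [l0, l1]
    exact Set.pair_comm _ _

/-! ### Small cases p = 2, 3 -/

def Os2 : ℕ → ℕ := fun j => if j = 0 then 3 else if j = 1 then 5 else if j = 2 then 7 else 1
def Es2 : ℕ → ℕ := fun j => if j = 0 then 2 else if j = 1 then 4 else if j = 2 then 6 else 8

def Os3 : ℕ → ℕ := fun j =>
  if j = 0 then 3 else if j = 1 then 5 else if j = 2 then 9 else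
  if j = 3 then 11 else if j = 4 then 7 else 1
def Es3 : ℕ → ℕ := fun j =>
  if j = 0 then 2 else if j = 1 then 4 else if j = 2 then 8 else
  if j = 3 then 10 else if j = 4 then 6 else 12

/-! ### Case p ≡ 1 (mod 3), p ≥ 7 -/

def A1 (p j : ℕ) : ℕ :=
  if j + 5 ≤ p then (if j % 2 = 1 then p - 1 - j else 2*p - 1 - j)
  else if j + 4 = p then 2*p + 1
  else if j + 3 = p then p + 2
  else if j + 2 = p then 3*p
  else if j + 1 = p then 3
  else if j = p then p
  else if j + 2 ≤ 2*p then (if j % 2 = 1 then j + p + 1 else j + 2*p + 1)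
  else 1

def B1 (p j : ℕ) : ℕ :=
  if j + 5 ≤ p then (if j % 2 = 1 then 2*p - 1 - j else p - 1 - j)
  else if j + 4 = p then 2*p
  else if j + 3 = p then 2
  else if j + 2 = p then p + 1
  else if j + 1 = p then p + 3
  else if j = p then 3*p + 1
  else if j + 2 ≤ 2*p then (if j % 2 = 1 then j + 2*p + 1 else j + p + 1)
  else 4*p

/-! ### Case p ≡ 2 (mod 3), p ≥ 5 -/

def A2 (p j : ℕ) : ℕ :=
  if j = 0 then 2*p + 3
  else if j = 1 then 3*p + 2
  else if j = 2 then p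
  else if j = 3 then p + 2
  else if j = 4 then 3
  else if j = 5 then 3*p
  else if j ≤ p + 1 then (if j % 2 = 1 then j + 2*p - 2 else j + 3*p - 2)
  else if j + 3 ≤ 2*p then (if j % 2 = 0 then 2*p + 1 - j else 3*p + 1 - j)
  else if j + 2 = 2*p then 2*p + 1
  else 1

def B2 (p j : ℕ) : ℕ :=
  if j = 0 then 3*p + 3
  else if j = 1 then 2*p + 2
  else if j = 2 then p + 1
  else if j = 3 then 2
  else if j = 4 then p + 3
  else if j = 5 then 3*p + 1
  else if j ≤ p + 1 then (if j % 2 = 1 then j + 3*p - 2 else j + 2*p - 2)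
  else if j + 3 ≤ 2*p then (if j % 2 = 0 then 3*p + 1 - j else 2*p + 1 - j)
  else if j + 2 = 2*p then 2*p
  else 4*p

/-! ### Value lemmas, case 1 -/

section Case1
variable (p j : ℕ)

lemma A1_chain (h : j + 5 ≤ p) :
    A1 p j = if j % 2 = 1 then p - 1 - j else 2*p - 1 - j := by
  simp only [A1]; rw [if_pos h]

lemma B1_chain (h : j + 5 ≤ p) :
    B1 p j = if j % 2 = 1 then 2*p - 1 - j else p - 1 - j := by
  simp only [B1]; rw [if_pos h]

lemma A1_a (h : j + 4 = p) : A1 p j = 2*p + 1 := by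
  simp only [A1]; rw [if_neg (by omega), if_pos h]

lemma B1_a (h : j + 4 = p) : B1 p j = 2*p := by
  simp only [B1]; rw [if_neg (by omega), if_pos h]

lemma A1_b (h : j + 3 = p) : A1 p j = p + 2 := by
  simp only [A1]; rw [if_neg (by omega), if_neg (by omega), if_pos h]

lemma B1_b (h : j + 3 = p) : B1 p j = 2 := by
  simp only [B1]; rw [if_neg (by omega), if_neg (by omega), if_pos h]

lemma A1_c (h : j + 2 = p) : A1 p j = 3*p := by
  simp only [A1]; rw [if_neg (by omega), if_neg (by omega), if_neg (by omega), if_pos h]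

lemma B1_c (h : j + 2 = p) : B1 p j = p + 1 := by
  simp only [B1]; rw [if_neg (by omega), if_neg (by omega), if_neg (by omega), if_pos h]

lemma A1_d (h : j + 1 = p) : A1 p j = 3 := by
  simp only [A1]
  rw [if_neg (by omega), if_neg (by omega), if_neg (by omega), if_neg (by omega), if_pos h]

lemma B1_d (h : j + 1 = p) : B1 p j = p + 3 := by
  simp only [B1]
  rw [if_neg (by omega), if_neg (by omega), if_neg (by omega), if_neg (by omega), if_pos h]

lemma A1_e (h : j = p) (h1 : 1 ≤ p) : A1 p j = p := by
  simp only [A1]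
  rw [if_neg (by omega), if_neg (by omega), if_neg (by omega), if_neg (by omega),
    if_neg (by omega), if_pos h]

lemma B1_e (h : j = p) (h1 : 1 ≤ p) : B1 p j = 3*p + 1 := by
  simp only [B1]
  rw [if_neg (by omega), if_neg (by omega), if_neg (by omega), if_neg (by omega),
    if_neg (by omega), if_pos h]

lemma A1_y (h1 : p + 1 ≤ j) (h2 : j + 2 ≤ 2*p) :
    A1 p j = if j % 2 = 1 then j + p + 1 else j + 2*p + 1 := by
  simp only [A1]
  rw [if_neg (by omega), if_neg (by omega), if_neg (by omega), if_neg (by omega),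
    if_neg (by omega), if_neg (by omega), if_pos h2]

lemma B1_y (h1 : p + 1 ≤ j) (h2 : j + 2 ≤ 2*p) :
    B1 p j = if j % 2 = 1 then j + 2*p + 1 else j + p + 1 := by
  simp only [B1]
  rw [if_neg (by omega), if_neg (by omega), if_neg (by omega), if_neg (by omega),
    if_neg (by omega), if_neg (by omega), if_pos h2]

lemma A1_f (h : j + 1 = 2*p) (h7 : 7 ≤ p) : A1 p j = 1 := by
  simp only [A1]
  rw [if_neg (by omega), if_neg (by omega), if_neg (by omega), if_neg (by omega),
    if_neg (by omega), if_neg (by omega), if_neg (by omega)]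

lemma B1_f (h : j + 1 = 2*p) (h7 : 7 ≤ p) : B1 p j = 4*p := by
  simp only [B1]
  rw [if_neg (by omega), if_neg (by omega), if_neg (by omega), if_neg (by omega),
    if_neg (by omega), if_neg (by omega), if_neg (by omega)]

end Case1

/-! ### Value lemmas, case 2 -/

section Case2
variable (p j : ℕ)

lemma A2_0 : A2 p 0 = 2*p + 3 := by simp [A2]
lemma B2_0 : B2 p 0 = 3*p + 3 := by simp [B2]
lemma A2_1 : A2 p 1 = 3*p + 2 := by simp [A2]
lemma B2_1 : B2 p 1 = 2*p + 2 := by simp [B2]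
lemma A2_2 : A2 p 2 = p := by simp [A2]
lemma B2_2 : B2 p 2 = p + 1 := by simp [B2]
lemma A2_3 : A2 p 3 = p + 2 := by simp [A2]
lemma B2_3 : B2 p 3 = 2 := by simp [B2]
lemma A2_4 : A2 p 4 = 3 := by simp [A2]
lemma B2_4 : B2 p 4 = p + 3 := by simp [B2]
lemma A2_5 : A2 p 5 = 3*p := by simp [A2]
lemma B2_5 : B2 p 5 = 3*p + 1 := by simp [B2]

lemma A2_y (h1 : 6 ≤ j) (h2 : j ≤ p + 1) :
    A2 p j = if j % 2 = 1 then j + 2*p - 2 else j + 3*p - 2 := by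
  simp only [A2]
  rw [if_neg (by omega), if_neg (by omega), if_neg (by omega), if_neg (by omega),
    if_neg (by omega), if_neg (by omega), if_pos h2]

lemma B2_y (h1 : 6 ≤ j) (h2 : j ≤ p + 1) :
    B2 p j = if j % 2 = 1 then j + 3*p - 2 else j + 2*p - 2 := by
  simp only [B2]
  rw [if_neg (by omega), if_neg (by omega), if_neg (by omega), if_neg (by omega),
    if_neg (by omega), if_neg (by omega), if_pos h2]

lemma A2_x (h1 : p + 2 ≤ j) (h2 : j + 3 ≤ 2*p) (h5 : 5 ≤ p) :
    A2 p j = if j % 2 = 0 then 2*p + 1 - j else 3*p + 1 - j := by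
  simp only [A2]
  rw [if_neg (by omega), if_neg (by omega), if_neg (by omega), if_neg (by omega),
    if_neg (by omega), if_neg (by omega), if_neg (by omega), if_pos h2]

lemma B2_x (h1 : p + 2 ≤ j) (h2 : j + 3 ≤ 2*p) (h5 : 5 ≤ p) :
    B2 p j = if j % 2 = 0 then 3*p + 1 - j else 2*p + 1 - j := by
  simp only [B2]
  rw [if_neg (by omega), if_neg (by omega), if_neg (by omega), if_neg (by omega),
    if_neg (by omega), if_neg (by omega), if_neg (by omega), if_pos h2]

lemma A2_s (h : j + 2 = 2*p) (h5 : 5 ≤ p) : A2 p j = 2*p + 1 := by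
  simp only [A2]
  rw [if_neg (by omega), if_neg (by omega), if_neg (by omega), if_neg (by omega),
    if_neg (by omega), if_neg (by omega), if_neg (by omega), if_neg (by omega), if_pos h]

lemma B2_s (h : j + 2 = 2*p) (h5 : 5 ≤ p) : B2 p j = 2*p := by
  simp only [B2]
  rw [if_neg (by omega), if_neg (by omega), if_neg (by omega), if_neg (by omega),
    if_neg (by omega), if_neg (by omega), if_neg (by omega), if_neg (by omega), if_pos h]

lemma A2_f (h : j + 1 = 2*p) (h5 : 5 ≤ p) : A2 p j = 1 := by
  simp only [A2]
  rw [if_neg (by omega), if_neg (by omega), if_neg (by omega), if_neg (by omega),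
    if_neg (by omega), if_neg (by omega), if_neg (by omega), if_neg (by omega),
    if_neg (by omega)]

lemma B2_f (h : j + 1 = 2*p) (h5 : 5 ≤ p) : B2 p j = 4*p := by
  simp only [B2]
  rw [if_neg (by omega), if_neg (by omega), if_neg (by omega), if_neg (by omega),
    if_neg (by omega), if_neg (by omega), if_neg (by omega), if_neg (by omega),
    if_neg (by omega)]

end Case2

/-! ### Structural lemmas for case 1 -/

lemma A1_cases (p j : ℕ) (hj : j < 2*p) (h7 : 7 ≤ p) :
    (j+5 ≤ p ∧ j % 2 = 1 ∧ A1 p j = p-1-j) ∨ (j+5 ≤ p ∧ j % 2 = 0 ∧ A1 p j = 2*p-1-j) ∨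
    (j+4 = p ∧ A1 p j = 2*p+1) ∨ (j+3 = p ∧ A1 p j = p+2) ∨ (j+2 = p ∧ A1 p j = 3*p) ∨
    (j+1 = p ∧ A1 p j = 3) ∨ (j = p ∧ A1 p j = p) ∨
    (p+1 ≤ j ∧ j+2 ≤ 2*p ∧ j % 2 = 1 ∧ A1 p j = j+p+1) ∨
    (p+1 ≤ j ∧ j+2 ≤ 2*p ∧ j % 2 = 0 ∧ A1 p j = j+2*p+1) ∨
    (j+1 = 2*p ∧ A1 p j = 1) := by
  by_cases hA : j + 5 ≤ p
  · by_cases hpar : j % 2 = 1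
    · exact Or.inl ⟨hA, hpar, by rw [A1_chain p j hA, if_pos hpar]⟩
    · exact Or.inr (Or.inl ⟨hA, by omega, by rw [A1_chain p j hA, if_neg hpar]⟩)
  by_cases hB : j + 4 = p
  · exact Or.inr (Or.inr (Or.inl ⟨hB, A1_a p j hB⟩))
  by_cases hC : j + 3 = p
  · exact Or.inr (Or.inr (Or.inr (Or.inl ⟨hC, A1_b p j hC⟩)))
  by_cases hD : j + 2 = p
  · exact Or.inr (Or.inr (Or.inr (Or.inr (Or.inl ⟨hD, A1_c p j hD⟩))))
  by_cases hE : j + 1 = p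
  · exact Or.inr (Or.inr (Or.inr (Or.inr (Or.inr (Or.inl ⟨hE, A1_d p j hE⟩)))))
  by_cases hF : j = p
  · exact Or.inr (Or.inr (Or.inr (Or.inr (Or.inr (Or.inr (Or.inl
      ⟨hF, A1_e p j hF (by omega)⟩))))))
  by_cases hG : j + 2 ≤ 2*p
  · by_cases hpar : j % 2 = 1
    · refine Or.inr (Or.inr (Or.inr (Or.inr (Or.inr (Or.inr (Or.inr (Or.inl
        ⟨by omega, hG, hpar, ?_⟩)))))))
      rw [A1_y p j (by omega) hG, if_pos hpar]
    · refine Or.inr (Or.inr (Or.inr (Or.inr (Or.inr (Or.inr (Or.inr (Or.inr (Or.inl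
        ⟨by omega, hG, by omega, ?_⟩))))))))
      rw [A1_y p j (by omega) hG, if_neg hpar]
  · exact Or.inr (Or.inr (Or.inr (Or.inr (Or.inr (Or.inr (Or.inr (Or.inr (Or.inr
      ⟨by omega, A1_f p j (by omega) h7⟩))))))))

lemma B1_cases (p j : ℕ) (hj : j < 2*p) (h7 : 7 ≤ p) :
    (j+5 ≤ p ∧ j % 2 = 1 ∧ B1 p j = 2*p-1-j) ∨ (j+5 ≤ p ∧ j % 2 = 0 ∧ B1 p j = p-1-j) ∨
    (j+4 = p ∧ B1 p j = 2*p) ∨ (j+3 = p ∧ B1 p j = 2) ∨ (j+2 = p ∧ B1 p j = p+1) ∨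
    (j+1 = p ∧ B1 p j = p+3) ∨ (j = p ∧ B1 p j = 3*p+1) ∨
    (p+1 ≤ j ∧ j+2 ≤ 2*p ∧ j % 2 = 1 ∧ B1 p j = j+2*p+1) ∨
    (p+1 ≤ j ∧ j+2 ≤ 2*p ∧ j % 2 = 0 ∧ B1 p j = j+p+1) ∨
    (j+1 = 2*p ∧ B1 p j = 4*p) := by
  by_cases hA : j + 5 ≤ p
  · by_cases hpar : j % 2 = 1
    · exact Or.inl ⟨hA, hpar, by rw [B1_chain p j hA, if_pos hpar]⟩
    · exact Or.inr (Or.inl ⟨hA, by omega, by rw [B1_chain p j hA, if_neg hpar]⟩)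
  by_cases hB : j + 4 = p
  · exact Or.inr (Or.inr (Or.inl ⟨hB, B1_a p j hB⟩))
  by_cases hC : j + 3 = p
  · exact Or.inr (Or.inr (Or.inr (Or.inl ⟨hC, B1_b p j hC⟩)))
  by_cases hD : j + 2 = p
  · exact Or.inr (Or.inr (Or.inr (Or.inr (Or.inl ⟨hD, B1_c p j hD⟩))))
  by_cases hE : j + 1 = p
  · exact Or.inr (Or.inr (Or.inr (Or.inr (Or.inr (Or.inl ⟨hE, B1_d p j hE⟩)))))
  by_cases hF : j = p
  · exact Or.inr (Or.inr (Or.inr (Or.inr (Or.inr (Or.inr (Or.inl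
      ⟨hF, B1_e p j hF (by omega)⟩))))))
  by_cases hG : j + 2 ≤ 2*p
  · by_cases hpar : j % 2 = 1
    · refine Or.inr (Or.inr (Or.inr (Or.inr (Or.inr (Or.inr (Or.inr (Or.inl
        ⟨by omega, hG, hpar, ?_⟩)))))))
      rw [B1_y p j (by omega) hG, if_pos hpar]
    · refine Or.inr (Or.inr (Or.inr (Or.inr (Or.inr (Or.inr (Or.inr (Or.inr (Or.inl
        ⟨by omega, hG, by omega, ?_⟩))))))))
      rw [B1_y p j (by omega) hG, if_neg hpar]
  · exact Or.inr (Or.inr (Or.inr (Or.inr (Or.inr (Or.inr (Or.inr (Or.inr (Or.inr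
      ⟨by omega, B1_f p j (by omega) h7⟩))))))))


section Case1Proofs
variable (p : ℕ)

lemma A1_odd (h2 : p % 2 = 1) (h7 : 7 ≤ p) : ∀ j < 2*p, A1 p j % 2 = 1 := by
  intro j hj; have c1 := A1_cases p j hj h7; omega

lemma B1_even (h2 : p % 2 = 1) (h7 : 7 ≤ p) : ∀ j < 2*p, B1 p j % 2 = 0 := by
  intro j hj; have c1 := B1_cases p j hj h7; omega

lemma A1_range (h2 : p % 2 = 1) (h7 : 7 ≤ p) : ∀ j < 2*p, 1 ≤ A1 p j ∧ A1 p j ≤ 4*p := by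
  intro j hj; have c1 := A1_cases p j hj h7; omega

lemma B1_range (h2 : p % 2 = 1) (h7 : 7 ≤ p) : ∀ j < 2*p, 1 ≤ B1 p j ∧ B1 p j ≤ 4*p := by
  intro j hj; have c1 := B1_cases p j hj h7; omega

lemma A1_inj (h2 : p % 2 = 1) (h7 : 7 ≤ p) :
    ∀ j < 2*p, ∀ j' < 2*p, A1 p j = A1 p j' → j = j' := by
  intro j hj j' hj' h
  have c1 := A1_cases p j hj h7; have c2 := A1_cases p j' hj' h7; omega

lemma B1_inj (h2 : p % 2 = 1) (h7 : 7 ≤ p) :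
    ∀ j < 2*p, ∀ j' < 2*p, B1 p j = B1 p j' → j = j' := by
  intro j hj j' hj' h
  have c1 := B1_cases p j hj h7; have c2 := B1_cases p j' hj' h7; omega

lemma CV1 (hp : p.Prime) (h3 : p % 3 = 1) (h2 : p % 2 = 1) (h7 : 7 ≤ p) :
    ∀ j < 2*p, Nat.Coprime (A1 p j) (B1 p j) := by
  intro j hj
  by_cases hA : j + 5 ≤ p
  · rw [A1_chain p j hA, B1_chain p j hA]
    by_cases hpar : j % 2 = 1
    · rw [if_pos hpar, if_pos hpar]
      exact cop_p_apart p _ _ hp (by omega) (fun hd => by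
        have := Nat.le_of_dvd (show 0 < p - 1 - j by omega) hd; omega)
    · rw [if_neg hpar, if_neg hpar]
      exact (cop_p_apart p (p - 1 - j) (2*p - 1 - j) hp (by omega) (fun hd => by
        have := Nat.le_of_dvd (show 0 < p - 1 - j by omega) hd; omega)).symm
  by_cases hB : j + 4 = p
  · rw [A1_a p j hB, B1_a p j hB]
    exact copc _ _ 1 1 1 one_pos (Or.inl (by omega)) (fun q h1 h2 _ _ _ => by omega)
  by_cases hC : j + 3 = p
  · rw [A1_b p j hC, B1_b p j hC]
    exact copc _ _ 0 1 2 (by norm_num) (Or.inr (by omega))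
      (fun q h1 h2 h3 h4 h5 => by interval_cases q <;> omega)
  by_cases hD : j + 2 = p
  · rw [A1_c p j hD, B1_c p j hD]
    exact copc _ _ 1 3 3 (by norm_num) (Or.inr (by omega))
      (fun q h1 h2 h3 h4 h5 => by interval_cases q <;> omega)
  by_cases hE : j + 1 = p
  · rw [A1_d p j hE, B1_d p j hE]
    exact copc _ _ 1 0 3 (by norm_num) (Or.inl (by omega))
      (fun q h1 h2 h3 h4 h5 => by interval_cases q <;> omega)
  by_cases hF : j = p
  · rw [A1_e p j hF (by omega), B1_e p j hF (by omega)]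
    exact copc _ _ 3 1 1 one_pos (Or.inr (by omega)) (fun q h1 h2 _ _ _ => by omega)
  by_cases hG : j + 2 ≤ 2*p
  · rw [A1_y p j (by omega) hG, B1_y p j (by omega) hG]
    by_cases hpar : j % 2 = 1
    · rw [if_pos hpar, if_pos hpar]
      refine cop_p_apart p _ _ hp (by omega) (fun hd => ?_)
      have h4 := Nat.dvd_sub hd (dvd_mul_left p 2)
      have h5 : j + p + 1 - 2 * p = j + 1 - p := by omega
      rw [h5] at h4
      have := Nat.le_of_dvd (show 0 < j + 1 - p by omega) h4
      omega
    · rw [if_neg hpar, if_neg hpar]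
      refine (cop_p_apart p (j + p + 1) (j + 2*p + 1) hp (by omega) (fun hd => ?_)).symm
      have h4 := Nat.dvd_sub hd (dvd_mul_left p 2)
      have h5 : j + p + 1 - 2 * p = j + 1 - p := by omega
      rw [h5] at h4
      have := Nat.le_of_dvd (show 0 < j + 1 - p by omega) h4
      omega
  · rw [A1_f p j (by omega) h7]
    exact Nat.coprime_one_left _

lemma CH1_1 (hp : p.Prime) (h3 : p % 3 = 1) (h2 : p % 2 = 1) (h7 : 7 ≤ p) :
    ∀ j, j + 2 ≤ 2*p → Nat.Coprime (A1 p j) (B1 p (j+1)) := by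
  intro j hj
  by_cases hA : j + 6 ≤ p
  · rw [A1_chain p j (by omega), B1_chain p (j+1) (by omega)]
    by_cases hpar : j % 2 = 1
    · rw [if_pos hpar, if_neg (by omega)]
      exact copc _ _ 1 1 1 one_pos (Or.inl (by omega)) (fun q h1 h2 _ _ _ => by omega)
    · rw [if_neg hpar, if_pos (by omega)]
      exact copc _ _ 1 1 1 one_pos (Or.inl (by omega)) (fun q h1 h2 _ _ _ => by omega)
  by_cases hB : j + 5 = p
  · rw [A1_chain p j (by omega), if_neg (by omega), B1_a p (j+1) (by omega)]
    exact copc _ _ 2 1 8 (by norm_num) (Or.inl (by omega))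
      (fun q h1 h2 h3 h4 h5 => by interval_cases q <;> omega)
  by_cases hC : j + 4 = p
  · rw [A1_a p j hC, B1_b p (j+1) (by omega)]
    exact copc _ _ 0 1 2 (by norm_num) (Or.inr (by omega))
      (fun q h1 h2 h3 h4 h5 => by interval_cases q <;> omega)
  by_cases hD : j + 3 = p
  · rw [A1_b p j hD, B1_c p (j+1) (by omega)]
    exact copc _ _ 1 1 1 one_pos (Or.inl (by omega)) (fun q h1 h2 _ _ _ => by omega)
  by_cases hE : j + 2 = p
  · rw [A1_c p j hE, B1_d p (j+1) (by omega)]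
    exact copc _ _ 1 3 9 (by norm_num) (Or.inr (by omega))
      (fun q h1 h2 h3 h4 h5 => by interval_cases q <;> omega)
  by_cases hF : j + 1 = p
  · rw [A1_d p j hF, B1_e p (j+1) (by omega) (by omega)]
    exact copc _ _ 1 0 3 (by norm_num) (Or.inl (by omega))
      (fun q h1 h2 h3 h4 h5 => by interval_cases q <;> omega)
  by_cases hG : j = p
  · rw [A1_e p j hG (by omega), B1_y p (j+1) (by omega) (by omega), if_neg (by omega)]
    exact copc _ _ 2 1 2 (by norm_num) (Or.inr (by omega))
      (fun q h1 h2 h3 h4 h5 => by interval_cases q <;> omega)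
  by_cases hH : j + 3 ≤ 2*p
  · rw [A1_y p j (by omega) (by omega), B1_y p (j+1) (by omega) (by omega)]
    by_cases hpar : j % 2 = 1
    · rw [if_pos hpar, if_neg (by omega)]
      exact copc _ _ 1 1 1 one_pos (Or.inr (by omega)) (fun q h1 h2 _ _ _ => by omega)
    · rw [if_neg hpar, if_pos (by omega)]
      exact copc _ _ 1 1 1 one_pos (Or.inr (by omega)) (fun q h1 h2 _ _ _ => by omega)
  · rw [A1_y p j (by omega) (by omega), if_neg (by omega), B1_f p (j+1) (by omega) h7]
    exact copc _ _ 1 1 1 one_pos (Or.inr (by omega)) (fun q h1 h2 _ _ _ => by omega)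

lemma CH2_1 (hp : p.Prime) (h3 : p % 3 = 1) (h2 : p % 2 = 1) (h7 : 7 ≤ p) :
    ∀ j, j + 2 ≤ 2*p → Nat.Coprime (B1 p j) (A1 p (j+1)) := by
  intro j hj
  by_cases hA : j + 6 ≤ p
  · rw [B1_chain p j (by omega), A1_chain p (j+1) (by omega)]
    by_cases hpar : j % 2 = 1
    · rw [if_pos hpar, if_neg (by omega)]
      exact copc _ _ 1 1 1 one_pos (Or.inl (by omega)) (fun q h1 h2 _ _ _ => by omega)
    · rw [if_neg hpar, if_pos (by omega)]
      exact copc _ _ 1 1 1 one_pos (Or.inl (by omega)) (fun q h1 h2 _ _ _ => by omega)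
  by_cases hB : j + 5 = p
  · rw [B1_chain p j (by omega), if_neg (by omega), A1_a p (j+1) (by omega)]
    exact copc _ _ 1 0 4 (by norm_num) (Or.inl (by omega))
      (fun q h1 h2 h3 h4 h5 => by interval_cases q <;> omega)
  by_cases hC : j + 4 = p
  · rw [B1_a p j hC, A1_b p (j+1) (by omega)]
    exact copc _ _ 1 2 4 (by norm_num) (Or.inr (by omega))
      (fun q h1 h2 h3 h4 h5 => by interval_cases q <;> omega)
  by_cases hD : j + 3 = p
  · rw [B1_b p j hD, A1_c p (j+1) (by omega)]
    exact copc _ _ 1 0 2 (by norm_num) (Or.inl (by omega))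
      (fun q h1 h2 h3 h4 h5 => by interval_cases q <;> omega)
  by_cases hE : j + 2 = p
  · rw [B1_c p j hE, A1_d p (j+1) (by omega)]
    exact copc _ _ 0 1 3 (by norm_num) (Or.inr (by omega))
      (fun q h1 h2 h3 h4 h5 => by interval_cases q <;> omega)
  by_cases hF : j + 1 = p
  · rw [B1_d p j hF, A1_e p (j+1) (by omega) (by omega)]
    exact copc _ _ 1 1 3 (by norm_num) (Or.inl (by omega))
      (fun q h1 h2 h3 h4 h5 => by interval_cases q <;> omega)
  by_cases hG : j = p
  · rw [B1_e p j hG (by omega), A1_y p (j+1) (by omega) (by omega), if_neg (by omega)]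
    exact copc _ _ 1 1 1 one_pos (Or.inr (by omega)) (fun q h1 h2 _ _ _ => by omega)
  by_cases hH : j + 3 ≤ 2*p
  · rw [B1_y p j (by omega) (by omega), A1_y p (j+1) (by omega) (by omega)]
    by_cases hpar : j % 2 = 1
    · rw [if_pos hpar, if_neg (by omega)]
      exact copc _ _ 1 1 1 one_pos (Or.inr (by omega)) (fun q h1 h2 _ _ _ => by omega)
    · rw [if_neg hpar, if_pos (by omega)]
      exact copc _ _ 1 1 1 one_pos (Or.inr (by omega)) (fun q h1 h2 _ _ _ => by omega)
  · rw [A1_f p (j+1) (by omega) h7]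
    exact Nat.coprime_one_right _

end Case1Proofs

/-! ### Structural lemmas for case 2 -/

lemma A2_cases (p j : ℕ) (hj : j < 2*p) (h5 : 5 ≤ p) :
    (j = 0 ∧ A2 p j = 2*p+3) ∨ (j = 1 ∧ A2 p j = 3*p+2) ∨ (j = 2 ∧ A2 p j = p) ∨
    (j = 3 ∧ A2 p j = p+2) ∨ (j = 4 ∧ A2 p j = 3) ∨ (j = 5 ∧ A2 p j = 3*p) ∨
    (6 ≤ j ∧ j ≤ p+1 ∧ j % 2 = 1 ∧ A2 p j = j + 2*p - 2) ∨
    (6 ≤ j ∧ j ≤ p+1 ∧ j % 2 = 0 ∧ A2 p j = j + 3*p - 2) ∨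
    (p+2 ≤ j ∧ j+3 ≤ 2*p ∧ j % 2 = 0 ∧ A2 p j = 2*p+1-j) ∨
    (p+2 ≤ j ∧ j+3 ≤ 2*p ∧ j % 2 = 1 ∧ A2 p j = 3*p+1-j) ∨
    (j+2 = 2*p ∧ A2 p j = 2*p+1) ∨ (j+1 = 2*p ∧ A2 p j = 1) := by
  by_cases h0 : j = 0
  · exact Or.inl ⟨h0, by subst h0; simp [A2]⟩
  by_cases h1 : j = 1
  · exact Or.inr (Or.inl ⟨h1, by subst h1; simp [A2]⟩)
  by_cases hc2 : j = 2
  · exact Or.inr (Or.inr (Or.inl ⟨hc2, by subst hc2; simp [A2]⟩))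
  by_cases hc3 : j = 3
  · exact Or.inr (Or.inr (Or.inr (Or.inl ⟨hc3, by subst hc3; simp [A2]⟩)))
  by_cases hc4 : j = 4
  · exact Or.inr (Or.inr (Or.inr (Or.inr (Or.inl ⟨hc4, by subst hc4; simp [A2]⟩))))
  by_cases hc5 : j = 5
  · exact Or.inr (Or.inr (Or.inr (Or.inr (Or.inr (Or.inl ⟨hc5, by subst hc5; simp [A2]⟩)))))
  by_cases hY : j ≤ p + 1
  · by_cases hpar : j % 2 = 1
    · refine Or.inr (Or.inr (Or.inr (Or.inr (Or.inr (Or.inr (Or.inl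
        ⟨by omega, hY, hpar, ?_⟩))))))
      rw [A2_y p j (by omega) hY, if_pos hpar]
    · refine Or.inr (Or.inr (Or.inr (Or.inr (Or.inr (Or.inr (Or.inr (Or.inl
        ⟨by omega, hY, by omega, ?_⟩)))))))
      rw [A2_y p j (by omega) hY, if_neg hpar]
  by_cases hX : j + 3 ≤ 2*p
  · by_cases hpar : j % 2 = 0
    · refine Or.inr (Or.inr (Or.inr (Or.inr (Or.inr (Or.inr (Or.inr (Or.inr (Or.inl
        ⟨by omega, hX, hpar, ?_⟩))))))))
      rw [A2_x p j (by omega) hX h5, if_pos hpar]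
    · refine Or.inr (Or.inr (Or.inr (Or.inr (Or.inr (Or.inr (Or.inr (Or.inr (Or.inr (Or.inl
        ⟨by omega, hX, by omega, ?_⟩)))))))))
      rw [A2_x p j (by omega) hX h5, if_neg hpar]
  by_cases hS : j + 2 = 2*p
  · exact Or.inr (Or.inr (Or.inr (Or.inr (Or.inr (Or.inr (Or.inr (Or.inr (Or.inr (Or.inr (Or.inl
      ⟨hS, A2_s p j hS h5⟩))))))))))
  · exact Or.inr (Or.inr (Or.inr (Or.inr (Or.inr (Or.inr (Or.inr (Or.inr (Or.inr (Or.inr (Or.inr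
      ⟨by omega, A2_f p j (by omega) h5⟩))))))))))

lemma B2_cases (p j : ℕ) (hj : j < 2*p) (h5 : 5 ≤ p) :
    (j = 0 ∧ B2 p j = 3*p+3) ∨ (j = 1 ∧ B2 p j = 2*p+2) ∨ (j = 2 ∧ B2 p j = p+1) ∨
    (j = 3 ∧ B2 p j = 2) ∨ (j = 4 ∧ B2 p j = p+3) ∨ (j = 5 ∧ B2 p j = 3*p+1) ∨
    (6 ≤ j ∧ j ≤ p+1 ∧ j % 2 = 1 ∧ B2 p j = j + 3*p - 2) ∨
    (6 ≤ j ∧ j ≤ p+1 ∧ j % 2 = 0 ∧ B2 p j = j + 2*p - 2) ∨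
    (p+2 ≤ j ∧ j+3 ≤ 2*p ∧ j % 2 = 0 ∧ B2 p j = 3*p+1-j) ∨
    (p+2 ≤ j ∧ j+3 ≤ 2*p ∧ j % 2 = 1 ∧ B2 p j = 2*p+1-j) ∨
    (j+2 = 2*p ∧ B2 p j = 2*p) ∨ (j+1 = 2*p ∧ B2 p j = 4*p) := by
  by_cases h0 : j = 0
  · exact Or.inl ⟨h0, by subst h0; simp [B2]⟩
  by_cases h1 : j = 1
  · exact Or.inr (Or.inl ⟨h1, by subst h1; simp [B2]⟩)
  by_cases hc2 : j = 2
  · exact Or.inr (Or.inr (Or.inl ⟨hc2, by subst hc2; simp [B2]⟩))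
  by_cases hc3 : j = 3
  · exact Or.inr (Or.inr (Or.inr (Or.inl ⟨hc3, by subst hc3; simp [B2]⟩)))
  by_cases hc4 : j = 4
  · exact Or.inr (Or.inr (Or.inr (Or.inr (Or.inl ⟨hc4, by subst hc4; simp [B2]⟩))))
  by_cases hc5 : j = 5
  · exact Or.inr (Or.inr (Or.inr (Or.inr (Or.inr (Or.inl ⟨hc5, by subst hc5; simp [B2]⟩)))))
  by_cases hY : j ≤ p + 1
  · by_cases hpar : j % 2 = 1
    · refine Or.inr (Or.inr (Or.inr (Or.inr (Or.inr (Or.inr (Or.inl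
        ⟨by omega, hY, hpar, ?_⟩))))))
      rw [B2_y p j (by omega) hY, if_pos hpar]
    · refine Or.inr (Or.inr (Or.inr (Or.inr (Or.inr (Or.inr (Or.inr (Or.inl
        ⟨by omega, hY, by omega, ?_⟩)))))))
      rw [B2_y p j (by omega) hY, if_neg hpar]
  by_cases hX : j + 3 ≤ 2*p
  · by_cases hpar : j % 2 = 0
    · refine Or.inr (Or.inr (Or.inr (Or.inr (Or.inr (Or.inr (Or.inr (Or.inr (Or.inl
        ⟨by omega, hX, hpar, ?_⟩))))))))
      rw [B2_x p j (by omega) hX h5, if_pos hpar]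
    · refine Or.inr (Or.inr (Or.inr (Or.inr (Or.inr (Or.inr (Or.inr (Or.inr (Or.inr (Or.inl
        ⟨by omega, hX, by omega, ?_⟩)))))))))
      rw [B2_x p j (by omega) hX h5, if_neg hpar]
  by_cases hS : j + 2 = 2*p
  · exact Or.inr (Or.inr (Or.inr (Or.inr (Or.inr (Or.inr (Or.inr (Or.inr (Or.inr (Or.inr (Or.inl
      ⟨hS, B2_s p j hS h5⟩))))))))))
  · exact Or.inr (Or.inr (Or.inr (Or.inr (Or.inr (Or.inr (Or.inr (Or.inr (Or.inr (Or.inr (Or.inr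
      ⟨by omega, B2_f p j (by omega) h5⟩))))))))))


section Case2Proofs
variable (p : ℕ)

lemma A2_odd (h2 : p % 2 = 1) (h5 : 5 ≤ p) : ∀ j < 2*p, A2 p j % 2 = 1 := by
  intro j hj; have c1 := A2_cases p j hj h5; omega

lemma B2_even (h2 : p % 2 = 1) (h5 : 5 ≤ p) : ∀ j < 2*p, B2 p j % 2 = 0 := by
  intro j hj; have c1 := B2_cases p j hj h5; omega

lemma A2_range (h2 : p % 2 = 1) (h5 : 5 ≤ p) : ∀ j < 2*p, 1 ≤ A2 p j ∧ A2 p j ≤ 4*p := by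
  intro j hj; have c1 := A2_cases p j hj h5; omega

lemma B2_range (h2 : p % 2 = 1) (h5 : 5 ≤ p) : ∀ j < 2*p, 1 ≤ B2 p j ∧ B2 p j ≤ 4*p := by
  intro j hj; have c1 := B2_cases p j hj h5; omega

lemma A2_inj (h2 : p % 2 = 1) (h5 : 5 ≤ p) :
    ∀ j < 2*p, ∀ j' < 2*p, A2 p j = A2 p j' → j = j' := by
  intro j hj j' hj' h
  have c1 := A2_cases p j hj h5; have c2 := A2_cases p j' hj' h5; omega

lemma B2_inj (h2 : p % 2 = 1) (h5 : 5 ≤ p) :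
    ∀ j < 2*p, ∀ j' < 2*p, B2 p j = B2 p j' → j = j' := by
  intro j hj j' hj' h
  have c1 := B2_cases p j hj h5; have c2 := B2_cases p j' hj' h5; omega

lemma CV2 (hp : p.Prime) (h3 : p % 3 = 2) (h2 : p % 2 = 1) (h5 : 5 ≤ p) :
    ∀ j < 2*p, Nat.Coprime (A2 p j) (B2 p j) := by
  intro j hj
  by_cases h0 : j = 0
  · subst h0; rw [A2_0, B2_0]
    exact copc _ _ 3 2 3 (by norm_num) (Or.inl (by omega))
      (fun q h1 h2' h3' h4 h5' => by interval_cases q <;> omega)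
  by_cases h1 : j = 1
  · subst h1; rw [A2_1, B2_1]
    exact copc _ _ 2 3 2 (by norm_num) (Or.inr (by omega))
      (fun q hq1 hq2 hq3 hq4 hq5 => by interval_cases q <;> omega)
  by_cases hc2 : j = 2
  · subst hc2; rw [A2_2, B2_2]
    exact copc _ _ 1 1 1 one_pos (Or.inr (by omega)) (fun q hq1 hq2 _ _ _ => by omega)
  by_cases hc3 : j = 3
  · subst hc3; rw [A2_3, B2_3]
    exact copc _ _ 0 1 2 (by norm_num) (Or.inr (by omega))
      (fun q hq1 hq2 hq3 hq4 hq5 => by interval_cases q <;> omega)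
  by_cases hc4 : j = 4
  · subst hc4; rw [A2_4, B2_4]
    exact copc _ _ 1 0 3 (by norm_num) (Or.inl (by omega))
      (fun q hq1 hq2 hq3 hq4 hq5 => by interval_cases q <;> omega)
  by_cases hc5 : j = 5
  · subst hc5; rw [A2_5, B2_5]
    exact copc _ _ 1 1 1 one_pos (Or.inr (by omega)) (fun q hq1 hq2 _ _ _ => by omega)
  by_cases hY : j ≤ p + 1
  · rw [A2_y p j (by omega) hY, B2_y p j (by omega) hY]
    by_cases hpar : j % 2 = 1
    · rw [if_pos hpar, if_pos hpar]
      refine cop_p_apart p _ _ hp (by omega) (fun hd => ?_)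
      have h4 := Nat.dvd_sub hd (dvd_mul_left p 2)
      have h6 : j + 2*p - 2 - 2 * p = j - 2 := by omega
      rw [h6] at h4
      have := Nat.le_of_dvd (show 0 < j - 2 by omega) h4
      omega
    · rw [if_neg hpar, if_neg hpar]
      refine (cop_p_apart p (j + 2*p - 2) (j + 3*p - 2) hp (by omega) (fun hd => ?_)).symm
      have h4 := Nat.dvd_sub hd (dvd_mul_left p 2)
      have h6 : j + 2*p - 2 - 2 * p = j - 2 := by omega
      rw [h6] at h4
      have := Nat.le_of_dvd (show 0 < j - 2 by omega) h4
      omega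
  by_cases hX : j + 3 ≤ 2*p
  · rw [A2_x p j (by omega) hX h5, B2_x p j (by omega) hX h5]
    by_cases hpar : j % 2 = 0
    · rw [if_pos hpar, if_pos hpar]
      exact cop_p_apart p _ _ hp (by omega) (fun hd => by
        have := Nat.le_of_dvd (show 0 < 2*p + 1 - j by omega) hd; omega)
    · rw [if_neg hpar, if_neg hpar]
      exact (cop_p_apart p (2*p + 1 - j) (3*p + 1 - j) hp (by omega) (fun hd => by
        have := Nat.le_of_dvd (show 0 < 2*p + 1 - j by omega) hd; omega)).symm
  by_cases hS : j + 2 = 2*p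
  · rw [A2_s p j hS h5, B2_s p j hS h5]
    exact copc _ _ 1 1 1 one_pos (Or.inl (by omega)) (fun q hq1 hq2 _ _ _ => by omega)
  · rw [A2_f p j (by omega) h5]
    exact Nat.coprime_one_left _

lemma CH1_2 (hp : p.Prime) (h3 : p % 3 = 2) (h2 : p % 2 = 1) (h5 : 5 ≤ p) :
    ∀ j, j + 2 ≤ 2*p → Nat.Coprime (A2 p j) (B2 p (j+1)) := by
  intro j hj
  by_cases h0 : j = 0
  · subst h0; rw [A2_0, B2_1]
    exact copc _ _ 1 1 1 one_pos (Or.inl (by omega)) (fun q hq1 hq2 _ _ _ => by omega)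
  by_cases h1 : j = 1
  · subst h1; rw [A2_1, B2_2]
    exact copc _ _ 1 3 1 one_pos (Or.inr (by omega)) (fun q hq1 hq2 _ _ _ => by omega)
  by_cases hc2 : j = 2
  · subst hc2; rw [A2_2, B2_3]
    exact copc _ _ 0 1 2 (by norm_num) (Or.inr (by omega))
      (fun q hq1 hq2 hq3 hq4 hq5 => by interval_cases q <;> omega)
  by_cases hc3 : j = 3
  · subst hc3; rw [A2_3, B2_4]
    exact copc _ _ 1 1 1 one_pos (Or.inr (by omega)) (fun q hq1 hq2 _ _ _ => by omega)
  by_cases hc4 : j = 4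
  · subst hc4; rw [A2_4, B2_5]
    exact copc _ _ 1 0 3 (by norm_num) (Or.inl (by omega))
      (fun q hq1 hq2 hq3 hq4 hq5 => by interval_cases q <;> omega)
  by_cases hc5 : j = 5
  · subst hc5; rw [A2_5, B2_y p 6 (by omega) (by omega), if_neg (by omega)]
    exact copc _ _ 2 3 12 (by norm_num) (Or.inr (by omega))
      (fun q hq1 hq2 hq3 hq4 hq5 => by interval_cases q <;> omega)
  by_cases hY : j + 1 ≤ p + 1
  · rw [A2_y p j (by omega) (by omega), B2_y p (j+1) (by omega) (by omega)]
    by_cases hpar : j % 2 = 1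
    · rw [if_pos hpar, if_neg (by omega)]
      exact copc _ _ 1 1 1 one_pos (Or.inr (by omega)) (fun q hq1 hq2 _ _ _ => by omega)
    · rw [if_neg hpar, if_pos (by omega)]
      exact copc _ _ 1 1 1 one_pos (Or.inr (by omega)) (fun q hq1 hq2 _ _ _ => by omega)
  by_cases hJ : j = p + 1
  · rw [A2_y p j (by omega) (by omega), if_neg (by omega),
      B2_x p (j+1) (by omega) (by omega) h5, if_neg (by omega)]
    exact copc _ _ 1 4 3 (by norm_num) (Or.inl (by omega))
      (fun q hq1 hq2 hq3 hq4 hq5 => by interval_cases q <;> omega)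
  by_cases hX : j + 4 ≤ 2*p
  · rw [A2_x p j (by omega) (by omega) h5, B2_x p (j+1) (by omega) (by omega) h5]
    by_cases hpar : j % 2 = 0
    · rw [if_pos hpar, if_neg (by omega)]
      exact copc _ _ 1 1 1 one_pos (Or.inl (by omega)) (fun q hq1 hq2 _ _ _ => by omega)
    · rw [if_neg hpar, if_pos (by omega)]
      exact copc _ _ 1 1 1 one_pos (Or.inl (by omega)) (fun q hq1 hq2 _ _ _ => by omega)
  by_cases hS : j + 3 = 2*p
  · rw [A2_x p j (by omega) (by omega) h5, if_neg (by omega), B2_s p (j+1) (by omega) h5]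
    exact copc _ _ 2 1 8 (by norm_num) (Or.inl (by omega))
      (fun q hq1 hq2 hq3 hq4 hq5 => by interval_cases q <;> omega)
  · rw [A2_s p j (by omega) h5, B2_f p (j+1) (by omega) h5]
    exact copc _ _ 2 1 2 (by norm_num) (Or.inl (by omega))
      (fun q hq1 hq2 hq3 hq4 hq5 => by interval_cases q <;> omega)

lemma CH2_2 (hp : p.Prime) (h3 : p % 3 = 2) (h2 : p % 2 = 1) (h5 : 5 ≤ p) :
    ∀ j, j + 2 ≤ 2*p → Nat.Coprime (B2 p j) (A2 p (j+1)) := by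
  intro j hj
  by_cases h0 : j = 0
  · subst h0; rw [B2_0, A2_1]
    exact copc _ _ 1 1 1 one_pos (Or.inl (by omega)) (fun q hq1 hq2 _ _ _ => by omega)
  by_cases h1 : j = 1
  · subst h1; rw [B2_1, A2_2]
    exact copc _ _ 1 2 2 (by norm_num) (Or.inl (by omega))
      (fun q hq1 hq2 hq3 hq4 hq5 => by interval_cases q <;> omega)
  by_cases hc2 : j = 2
  · subst hc2; rw [B2_2, A2_3]
    exact copc _ _ 1 1 1 one_pos (Or.inr (by omega)) (fun q hq1 hq2 _ _ _ => by omega)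
  by_cases hc3 : j = 3
  · subst hc3; rw [B2_3, A2_4]
    exact copc _ _ 1 1 1 one_pos (Or.inr (by omega)) (fun q hq1 hq2 _ _ _ => by omega)
  by_cases hc4 : j = 4
  · subst hc4; rw [B2_4, A2_5]
    exact copc _ _ 3 1 9 (by norm_num) (Or.inl (by omega))
      (fun q hq1 hq2 hq3 hq4 hq5 => by interval_cases q <;> omega)
  by_cases hc5 : j = 5
  · subst hc5; rw [B2_5, A2_y p 6 (by omega) (by omega), if_neg (by omega)]
    exact copc _ _ 1 1 3 (by norm_num) (Or.inr (by omega))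
      (fun q hq1 hq2 hq3 hq4 hq5 => by interval_cases q <;> omega)
  by_cases hY : j + 1 ≤ p + 1
  · rw [B2_y p j (by omega) (by omega), A2_y p (j+1) (by omega) (by omega)]
    by_cases hpar : j % 2 = 1
    · rw [if_pos hpar, if_neg (by omega)]
      exact copc _ _ 1 1 1 one_pos (Or.inr (by omega)) (fun q hq1 hq2 _ _ _ => by omega)
    · rw [if_neg hpar, if_pos (by omega)]
      exact copc _ _ 1 1 1 one_pos (Or.inr (by omega)) (fun q hq1 hq2 _ _ _ => by omega)
  by_cases hJ : j = p + 1
  · rw [B2_y p j (by omega) (by omega), if_neg (by omega),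
      A2_x p (j+1) (by omega) (by omega) h5, if_neg (by omega)]
    exact copc _ _ 2 3 1 one_pos (Or.inl (by omega)) (fun q hq1 hq2 _ _ _ => by omega)
  by_cases hX : j + 4 ≤ 2*p
  · rw [B2_x p j (by omega) (by omega) h5, A2_x p (j+1) (by omega) (by omega) h5]
    by_cases hpar : j % 2 = 0
    · rw [if_pos hpar, if_neg (by omega)]
      exact copc _ _ 1 1 1 one_pos (Or.inl (by omega)) (fun q hq1 hq2 _ _ _ => by omega)
    · rw [if_neg hpar, if_pos (by omega)]
      exact copc _ _ 1 1 1 one_pos (Or.inl (by omega)) (fun q hq1 hq2 _ _ _ => by omega)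
  by_cases hS : j + 3 = 2*p
  · rw [B2_x p j (by omega) (by omega) h5, if_neg (by omega), A2_s p (j+1) (by omega) h5]
    exact copc _ _ 1 0 4 (by norm_num) (Or.inl (by omega))
      (fun q hq1 hq2 hq3 hq4 hq5 => by interval_cases q <;> omega)
  · rw [B2_s p j (by omega) h5, A2_f p (j+1) (by omega) h5]
    exact Nat.coprime_one_right _

end Case2Proofs

/-- For every prime `p` there is a prime labeling of `P_2 × P_{2p}` in which the
two vertices of the final column (column `2p`, i.e. index `2p - 1`) receive the
labels `1` and `4p`. -/
theorem exists_primeLabeling_ladder_two_mul_prime_with_final_column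
    (p : ℕ) (hp : p.Prime) :
    ∃ f : (Fin 2 × Fin (2 * p)) ≃ Fin (2 * (2 * p)),
      (∀ u v, (Ladder (2 * p)).Adj u v →
        Nat.Coprime ((f u : ℕ) + 1) ((f v : ℕ) + 1)) ∧
      ∀ j : Fin (2 * p), (j : ℕ) = 2 * p - 1 →
        ({(f (0, j) : ℕ) + 1, (f (1, j) : ℕ) + 1} : Set ℕ) = {1, 4 * p} := by
  rcases eq_or_ne p 2 with rfl | hp2
  · refine assemble 2 (by norm_num) Os2 Es2 ?_ ?_ ?_ ?_ ?_ ?_ ?_ ?_ ?_ (by simp [Os2]) (by simp [Es2])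
    · intro j hj; simp only [Os2]; split_ifs <;> omega
    · intro j hj; simp only [Es2]; split_ifs <;> omega
    · intro j hj; simp only [Os2]; split_ifs <;> omega
    · intro j hj; simp only [Es2]; split_ifs <;> omega
    · intro j hj j' hj' h; simp only [Os2] at h; split_ifs at h <;> omega
    · intro j hj j' hj' h; simp only [Es2] at h; split_ifs at h <;> omega
    · intro j hj
      rcases (by omega : j = 0 ∨ j = 1 ∨ j = 2 ∨ j = 3) with rfl | rfl | rfl | rfl <;> decide
    · intro j hj
      rcases (by omega : j = 0 ∨ j = 1 ∨ j = 2) with rfl | rfl | rfl <;> decide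
    · intro j hj
      rcases (by omega : j = 0 ∨ j = 1 ∨ j = 2) with rfl | rfl | rfl <;> decide
  rcases eq_or_ne p 3 with rfl | hp3
  · refine assemble 3 (by norm_num) Os3 Es3 ?_ ?_ ?_ ?_ ?_ ?_ ?_ ?_ ?_ (by simp [Os3]) (by simp [Es3])
    · intro j hj; simp only [Os3]; split_ifs <;> omega
    · intro j hj; simp only [Es3]; split_ifs <;> omega
    · intro j hj; simp only [Os3]; split_ifs <;> omega
    · intro j hj; simp only [Es3]; split_ifs <;> omega
    · intro j hj j' hj' h; simp only [Os3] at h; split_ifs at h <;> omega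
    · intro j hj j' hj' h; simp only [Es3] at h; split_ifs at h <;> omega
    · intro j hj
      rcases (by omega : j = 0 ∨ j = 1 ∨ j = 2 ∨ j = 3 ∨ j = 4 ∨ j = 5) with
        rfl | rfl | rfl | rfl | rfl | rfl <;> decide
    · intro j hj
      rcases (by omega : j = 0 ∨ j = 1 ∨ j = 2 ∨ j = 3 ∨ j = 4) with
        rfl | rfl | rfl | rfl | rfl <;> decide
    · intro j hj
      rcases (by omega : j = 0 ∨ j = 1 ∨ j = 2 ∨ j = 3 ∨ j = 4) with
        rfl | rfl | rfl | rfl | rfl <;> decide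
  have hne2 : ¬ (2 ∣ p) := by
    intro h; rcases (Nat.prime_dvd_prime_iff_eq Nat.prime_two hp).mp h with h1; omega
  have hne3 : ¬ (3 ∣ p) := by
    intro h; rcases (Nat.prime_dvd_prime_iff_eq Nat.prime_three hp).mp h with h1; omega
  have hp4 : p ≠ 4 := by rintro rfl; norm_num at hp
  have h2 : p % 2 = 1 := by omega
  have h5 : 5 ≤ p := by have := hp.two_le; omega
  have h3 : p % 3 = 1 ∨ p % 3 = 2 := by omega
  rcases h3 with h3 | h3
  · have h7 : 7 ≤ p := by omega
    exact assemble p (by omega) (A1 p) (B1 p)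
      (A1_odd p h2 h7) (B1_even p h2 h7) (A1_range p h2 h7) (B1_range p h2 h7)
      (A1_inj p h2 h7) (B1_inj p h2 h7)
      (CV1 p hp h3 h2 h7) (CH1_1 p hp h3 h2 h7) (CH2_1 p hp h3 h2 h7)
      (A1_f p (2*p - 1) (by omega) h7) (B1_f p (2*p - 1) (by omega) h7)
  · exact assemble p (by omega) (A2 p) (B2 p)
      (A2_odd p h2 h5) (B2_even p h2 h5) (A2_range p h2 h5) (B2_range p h2 h5)
      (A2_inj p h2 h5) (B2_inj p h2 h5)
      (CV2 p hp h3 h2 h5) (CH1_2 p hp h3 h2 h5) (CH2_2 p hp h3 h2 h5)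
      (A2_f p (2*p - 1) (by omega) h5) (B2_f p (2*p - 1) (by omega) h5)
end

section
/- If a positive integer n has a strong canonical partition, then the ladder L_n = P_2 × P_n has a prime labeling. -/
/-- A canonical partition of `n` is a sequence `p 1, …, p m` of odd primes summing
to `n` with `p j ≥ 2(p 1 + ⋯ + p (j-1)) + 3` for `1 < j ≤ m`. (The values of `p`
outside `{1, …, m}` are irrelevant.) -/
def IsCanonicalPartition (n m : ℕ) (p : ℕ → ℕ) : Prop :=
  (∀ j ∈ Finset.Icc 1 m, (p j).Prime ∧ Odd (p j)) ∧
  (∑ i ∈ Finset.Icc 1 m, p i) = n ∧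
  (∀ j, 1 < j → j ≤ m → 2 * (∑ i ∈ Finset.Icc 1 (j - 1), p i) + 3 ≤ p j)

/-- `σ k = 2(p 1 + ⋯ + p (k-2)) + p (k-1)`. -/
def sigmaCP (p : ℕ → ℕ) (k : ℕ) : ℕ := 2 * (∑ i ∈ Finset.Icc 1 (k - 2), p i) + p (k - 1)

/-- `τ k = 2(p 1 + ⋯ + p (k-1)) + p k + 1`. -/
def tauCP (p : ℕ → ℕ) (k : ℕ) : ℕ := 2 * (∑ i ∈ Finset.Icc 1 (k - 1), p i) + p k + 1

/-- A canonical partition `p 1, …, p m` is strong if `σ k` and `τ k` are coprime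
for every `k` with `3 ≤ k ≤ m`. -/
def IsStrongCP (m : ℕ) (p : ℕ → ℕ) : Prop :=
  ∀ k, 3 ≤ k → k ≤ m → Nat.Coprime (sigmaCP p k) (tauCP p k)



namespace LadderAux

set_option linter.unnecessarySimpa false

/-- coprime via small difference -/
lemma copLin {x y : ℕ} (h : (y = x + 1 ∨ x = y + 1) ∨ ((y = x + 3 ∨ x = y + 3) ∧ x % 3 ≠ 0)) :
    Nat.Coprime x y := by
  have key : ∀ a b : ℕ, b = a + 1 → Nat.Coprime a b := by
    rintro a b rfl
    have : Nat.Coprime a (1 + a) := Nat.coprime_add_self_right.mpr (Nat.coprime_one_right a)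
    simpa [Nat.add_comm] using this
  have key3 : ∀ a b : ℕ, b = a + 3 → a % 3 ≠ 0 → Nat.Coprime a b := by
    rintro a b rfl ha
    have h3 : Nat.Coprime a 3 := by
      have : ¬ (3 ∣ a) := by omega
      exact ((Nat.Prime.coprime_iff_not_dvd Nat.prime_three).mpr this).symm
    have : Nat.Coprime a (3 + a) := Nat.coprime_add_self_right.mpr h3
    simpa [Nat.add_comm] using this
  rcases h with (h | h) | ⟨(h | h), h3⟩
  · exact key x y h
  · exact (key y x h).symm
  · exact key3 x y h h3
  · exact (key3 y x h (by omega)).symm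

lemma copPvert {P a : ℕ} (hP : P.Prime) (h1 : 0 < a) (h2 : a < 2*P) (hne : a ≠ P) :
    Nat.Coprime a (a + P) := by
  have hnd : ¬ P ∣ a := by
    rintro ⟨c, rfl⟩
    have hc : c = 0 ∨ c = 1 ∨ 2 ≤ c := by omega
    rcases hc with rfl | rfl | hc
    · simp at h1
    · simp at hne
    · have : P * 2 ≤ P * c := Nat.mul_le_mul_left _ hc
      omega
  have : Nat.Coprime a P := ((Nat.Prime.coprime_iff_not_dvd hP).mpr hnd).symm
  have := Nat.coprime_add_self_right.mpr this
  simpa [Nat.add_comm] using this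

/-- vertical pair closer -/
lemma copV {P x y : ℕ} (hP : P.Prime)
    (h : (y = x + P ∧ 0 < x ∧ x < 2*P ∧ x ≠ P) ∨ (x = y + P ∧ 0 < y ∧ y < 2*P ∧ y ≠ P)) :
    Nat.Coprime x y := by
  rcases h with ⟨rfl, h1, h2, h3⟩ | ⟨rfl, h1, h2, h3⟩
  · exact copPvert hP h1 h2 h3
  · exact (copPvert hP h1 h2 h3).symm

lemma copP2 {x y : ℕ} (hx : x % 2 = 1) (hy : y = 2) : Nat.Coprime x y := by
  subst hy
  have : ¬ (2 ∣ x) := by omega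
  exact ((Nat.Prime.coprime_iff_not_dvd Nat.prime_two).mpr this).symm

lemma copPspec1 {P : ℕ} (hP : P.Prime) (h5 : 5 ≤ P) : Nat.Coprime P (2*P+2) := by
  refine (Nat.Prime.coprime_iff_not_dvd hP).mpr ?_
  intro h
  have h2 : P ∣ 2*P := dvd_mul_left P 2
  have : P ∣ 2 := (Nat.dvd_add_right h2).mp h
  have := Nat.le_of_dvd (by norm_num) this
  omega

lemma copPspec2 {P : ℕ} (hP : P.Prime) (hodd : P % 2 = 1) (h5 : 5 ≤ P) :
    Nat.Coprime (P+2) (2*P) := by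
  have c2 : Nat.Coprime (P+2) 2 := copP2 (by omega) rfl
  have cP : Nat.Coprime (P+2) P := by
    have : ¬ P ∣ (P + 2) := by
      intro h
      have : P ∣ 2 := (Nat.dvd_add_right (dvd_refl P)).mp h
      have := Nat.le_of_dvd (by norm_num) this
      omega
    exact ((Nat.Prime.coprime_iff_not_dvd hP).mpr this).symm
  exact Nat.Coprime.mul_right c2 cP

lemma copA {P x y : ℕ} (hP : P.Prime) (h5 : 5 ≤ P)
    (h : (x = P ∧ y = 2*P+2) ∨ (y = P ∧ x = 2*P+2)) : Nat.Coprime x y := by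
  rcases h with ⟨rfl, rfl⟩ | ⟨rfl, rfl⟩
  · exact copPspec1 hP h5
  · exact (copPspec1 hP h5).symm

lemma copB {P x y : ℕ} (hP : P.Prime) (hodd : P % 2 = 1) (h5 : 5 ≤ P)
    (h : (x = P+2 ∧ y = 2*P) ∨ (y = P+2 ∧ x = 2*P)) : Nat.Coprime x y := by
  rcases h with ⟨rfl, rfl⟩ | ⟨rfl, rfl⟩
  · exact copPspec2 hP hodd h5
  · exact (copPspec2 hP hodd h5).symm

/-- prefix sums of the partition -/
def Sf (p : ℕ → ℕ) (k : ℕ) : ℕ := ∑ i ∈ Finset.Icc 1 k, p i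

lemma Sf_zero (p : ℕ → ℕ) : Sf p 0 = 0 := by simp [Sf]

lemma Sf_succ (p : ℕ → ℕ) (k : ℕ) : Sf p (k+1) = Sf p k + p (k+1) :=
  Finset.sum_Icc_succ_top (by omega) p

lemma Sf_mono (p : ℕ → ℕ) {k k' : ℕ} (h : k ≤ k') : Sf p k ≤ Sf p k' :=
  Finset.sum_le_sum_of_subset (Finset.Icc_subset_Icc_right h)

lemma Sf_one (p : ℕ → ℕ) : Sf p 1 = p 1 := by simp [Sf]

/-- block index (0-based) of column j -/
def K0 (p : ℕ → ℕ) (m j : ℕ) : ℕ := Nat.findGreatest (fun k => Sf p k ≤ j) m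

def colOdd (s P j : ℕ) : ℕ := if (s + j + 1) % 2 = 1 then s + j + 1 else s + j + 1 + P
def colEven (s P j : ℕ) : ℕ := if (s + j + 1) % 2 = 1 then s + j + 1 + P else s + j + 1

def colO (k0 s P j : ℕ) : ℕ :=
  if k0 = 0 then
    (if j = 0 then P else if j + 1 = P then 1 else colOdd s P j)
  else if P % 3 = 2 then
    (if j + s + 1 = P then P + 2 else if j + s = P + 1 then P else colOdd s P j)
  else colOdd s P j

def colE (k0 s P j : ℕ) : ℕ :=
  if k0 ≠ 0 ∧ P % 3 = 1 then
    (if j + s + 1 = P then 2*P + 2 else if j + s = P + 1 then 2*P else colEven s P j)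
  else colEven s P j

section ColLemmas

variable {k0 s P j j' : ℕ}

/-- hypothesis bundle -/
def Facts (k0 s P j : ℕ) : Prop :=
  P % 2 = 1 ∧ 3 ≤ P ∧ s ≤ j ∧ j < s + P ∧ (k0 = 0 → s = 0) ∧
    (k0 ≠ 0 → 3 ≤ s ∧ 2*s + 3 ≤ P ∧ P % 3 ≠ 0)

lemma colO_odd (h : Facts k0 s P j) : colO k0 s P j % 2 = 1 := by
  obtain ⟨h1, h2, h3, h4, h5, h6⟩ := h
  by_cases hk : k0 = 0
  · have hs := h5 hk
    simp only [colO, colOdd, if_pos hk]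
    split_ifs <;> omega
  · obtain ⟨hs3, hgap, h3P⟩ := h6 hk
    simp only [colO, colOdd, if_neg hk]
    split_ifs <;> omega

lemma colE_even (h : Facts k0 s P j) : colE k0 s P j % 2 = 0 := by
  obtain ⟨h1, h2, h3, h4, h5, h6⟩ := h
  simp only [colE, colEven]
  split_ifs <;> omega

lemma colO_range (h : Facts k0 s P j) : 2*s + 1 ≤ colO k0 s P j ∧ colO k0 s P j ≤ 2*s + 2*P := by
  obtain ⟨h1, h2, h3, h4, h5, h6⟩ := h
  by_cases hk : k0 = 0
  · have hs := h5 hk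
    simp only [colO, colOdd, if_pos hk]
    split_ifs <;> omega
  · obtain ⟨hs3, hgap, h3P⟩ := h6 hk
    simp only [colO, colOdd, if_neg hk]
    split_ifs <;> omega

lemma colE_range (h : Facts k0 s P j) : 2*s + 1 ≤ colE k0 s P j ∧ colE k0 s P j ≤ 2*s + 2*P := by
  obtain ⟨h1, h2, h3, h4, h5, h6⟩ := h
  by_cases hk : k0 = 0
  · have hs := h5 hk
    simp only [colE, colEven]
    split_ifs <;> omega
  · obtain ⟨hs3, hgap, h3P⟩ := h6 hk
    simp only [colE, colEven]
    split_ifs <;> omega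

lemma colO_inj (h : Facts k0 s P j) (h' : Facts k0 s P j')
    (heq : colO k0 s P j = colO k0 s P j') : j = j' := by
  obtain ⟨h1, h2, h3, h4, h5, h6⟩ := h
  obtain ⟨_, _, h3', h4', _, _⟩ := h'
  by_cases hk : k0 = 0
  · have hs := h5 hk
    simp only [colO, colOdd, if_pos hk] at heq
    split_ifs at heq <;> omega
  · obtain ⟨hs3, hgap, h3P⟩ := h6 hk
    simp only [colO, colOdd, if_neg hk] at heq
    split_ifs at heq <;> omega

lemma colE_inj (h : Facts k0 s P j) (h' : Facts k0 s P j')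
    (heq : colE k0 s P j = colE k0 s P j') : j = j' := by
  obtain ⟨h1, h2, h3, h4, h5, h6⟩ := h
  obtain ⟨_, _, h3', h4', _, _⟩ := h'
  by_cases hk : k0 = 0
  · have hs := h5 hk
    simp only [colE, colEven] at heq
    split_ifs at heq <;> omega
  · obtain ⟨hs3, hgap, h3P⟩ := h6 hk
    simp only [colE, colEven] at heq
    split_ifs at heq <;> omega

lemma colVert (hP : P.Prime) (h : Facts k0 s P j) :
    Nat.Coprime (colO k0 s P j) (colE k0 s P j) := by
  obtain ⟨h1, h2, h3, h4, h5, h6⟩ := h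
  by_cases hk : k0 = 0
  · have hs := h5 hk
    simp only [colO, colE, colOdd, colEven, if_pos hk]
    split_ifs <;>
      first
        | (exfalso; omega)
        | (exact (‹False›).elim)
        | (exact Nat.coprime_one_left _)
        | (exact Nat.coprime_one_right _)
        | (apply copLin; omega)
        | (apply copV hP; omega)
        | (apply copP2 <;> omega)
  · obtain ⟨hs3, hgap, h3P⟩ := h6 hk
    simp only [colO, colE, colOdd, colEven, if_neg hk]
    split_ifs <;>
      first
        | (exfalso; omega)
        | (exact (‹False›).elim)
        | (exact Nat.coprime_one_left _)
        | (exact Nat.coprime_one_right _)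
        | (apply copLin; omega)
        | (apply copV hP; omega)
        | (apply copP2 <;> omega)
        | (apply copA hP (by omega); omega)
        | (apply copB hP h1 (by omega); omega)

lemma colHoriz1 (hP : P.Prime) (h : Facts k0 s P j) (h' : Facts k0 s P (j+1)) :
    Nat.Coprime (colO k0 s P j) (colE k0 s P (j+1)) := by
  obtain ⟨h1, h2, h3, h4, h5, h6⟩ := h
  obtain ⟨_, _, h3', h4', _, _⟩ := h'
  by_cases hk : k0 = 0
  · have hs := h5 hk
    simp only [colO, colE, colOdd, colEven, if_pos hk]
    split_ifs <;>
      first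
        | (exfalso; omega)
        | (exact (‹False›).elim)
        | (exact Nat.coprime_one_left _)
        | (exact Nat.coprime_one_right _)
        | (apply copLin; omega)
        | (apply copV hP; omega)
        | (apply copP2 <;> omega)
  · obtain ⟨hs3, hgap, h3P⟩ := h6 hk
    simp only [colO, colE, colOdd, colEven, if_neg hk]
    split_ifs <;>
      first
        | (exfalso; omega)
        | (exact (‹False›).elim)
        | (exact Nat.coprime_one_left _)
        | (exact Nat.coprime_one_right _)
        | (apply copLin; omega)
        | (apply copV hP; omega)
        | (apply copP2 <;> omega)
        | (apply copA hP (by omega); omega)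
        | (apply copB hP h1 (by omega); omega)

lemma colHoriz2 (hP : P.Prime) (h : Facts k0 s P j) (h' : Facts k0 s P (j+1)) :
    Nat.Coprime (colE k0 s P j) (colO k0 s P (j+1)) := by
  obtain ⟨h1, h2, h3, h4, h5, h6⟩ := h
  obtain ⟨_, _, h3', h4', _, _⟩ := h'
  by_cases hk : k0 = 0
  · have hs := h5 hk
    simp only [colO, colE, colOdd, colEven, if_pos hk]
    split_ifs <;>
      first
        | (exfalso; omega)
        | (exact (‹False›).elim)
        | (exact Nat.coprime_one_left _)
        | (exact Nat.coprime_one_right _)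
        | (apply copLin; omega)
        | (apply copV hP; omega)
        | (apply copP2 <;> omega)
  · obtain ⟨hs3, hgap, h3P⟩ := h6 hk
    simp only [colO, colE, colOdd, colEven, if_neg hk]
    split_ifs <;>
      first
        | (exfalso; omega)
        | (exact (‹False›).elim)
        | (exact Nat.coprime_one_left _)
        | (exact Nat.coprime_one_right _)
        | (apply copLin; omega)
        | (apply copV hP; omega)
        | (apply copP2 <;> omega)
        | (apply copA hP (by omega); omega)
        | (apply copB hP h1 (by omega); omega)

end ColLemmas


section Global

variable (p : ℕ → ℕ) (m : ℕ)

lemma K0_le (j : ℕ) : K0 p m j ≤ m := Nat.findGreatest_le m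

lemma K0_base (j : ℕ) : Sf p (K0 p m j) ≤ j :=
  Nat.findGreatest_spec (P := fun k => Sf p k ≤ j) (Nat.zero_le m) (by simp [Sf_zero])

lemma K0_eq {j k : ℕ} (hk : k ≤ m) (h1 : Sf p k ≤ j) (h2 : j < Sf p (k+1)) :
    K0 p m j = k := by
  refine le_antisymm ?_ (Nat.le_findGreatest hk h1)
  by_contra h
  have hlt : k < K0 p m j := by omega
  have hb := K0_base p m j
  have hmono : Sf p (k+1) ≤ Sf p (K0 p m j) := Sf_mono p (by omega)
  omega

lemma K0_lt {n j : ℕ} (hsum : Sf p m = n) (hj : j < n) : K0 p m j < m := by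
  have h1 := K0_le p m j
  have h2 := K0_base p m j
  rcases Nat.lt_or_ge (K0 p m j) m with h | h
  · exact h
  · have : K0 p m j = m := by omega
    rw [this, hsum] at h2
    omega

lemma K0_ub {n j : ℕ} (hsum : Sf p m = n) (hj : j < n) :
    j < Sf p (K0 p m j + 1) := by
  have hlt := K0_lt p m hsum hj
  have := Nat.findGreatest_is_greatest (P := fun k => Sf p k ≤ j)
    (by omega : K0 p m j < K0 p m j + 1) (by omega)
  omega

/-- final global odd label -/
def OB (j : ℕ) : ℕ := colO (K0 p m j) (Sf p (K0 p m j)) (p (K0 p m j + 1)) j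
/-- final global even label -/
def EB (j : ℕ) : ℕ := colE (K0 p m j) (Sf p (K0 p m j)) (p (K0 p m j + 1)) j

end Global

end LadderAux

/-- If a positive integer `n` has a strong canonical partition, then the ladder
`L n = P_2 × P_n` has a prime labeling. -/
theorem ladder_prime_of_strong_canonical_partition
    (n m : ℕ) (p : ℕ → ℕ) (hn : 0 < n)
    (hcp : IsCanonicalPartition n m p) (hstrong : IsStrongCP m p) :
    HasPrimeLabeling n := by
  classical
  open LadderAux in
  obtain ⟨hpr, hsum', hgap⟩ := hcp
  have hsum : Sf p m = n := hsum'
  have hp3 : ∀ k, 1 ≤ k → k ≤ m → (p k).Prime ∧ p k % 2 = 1 ∧ 3 ≤ p k := by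
    intro k h1 h2
    obtain ⟨hp, ho⟩ := hpr k (Finset.mem_Icc.mpr ⟨h1, h2⟩)
    have h2le := hp.two_le
    have hmod := Nat.odd_iff.mp ho
    exact ⟨hp, hmod, by omega⟩
  -- all facts about the block containing column j
  have hfacts : ∀ j, j < n →
      Facts (K0 p m j) (Sf p (K0 p m j)) (p (K0 p m j + 1)) j ∧
      (p (K0 p m j + 1)).Prime ∧
      Sf p (K0 p m j) + p (K0 p m j + 1) ≤ n := by
    intro j hj
    have hklt := K0_lt p m hsum hj
    have hbase := K0_base p m j
    have hub := K0_ub p m hsum hj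
    have hsucc := Sf_succ p (K0 p m j)
    have hP := hp3 (K0 p m j + 1) (by omega) (by omega)
    have hjlt : j < Sf p (K0 p m j) + p (K0 p m j + 1) := by omega
    have hrange : Sf p (K0 p m j) + p (K0 p m j + 1) ≤ n := by
      rw [← hsucc, ← hsum]; exact Sf_mono p (by omega)
    refine ⟨⟨hP.2.1, hP.2.2, hbase, hjlt, ?_, ?_⟩, hP.1, hrange⟩
    · intro hk; rw [hk, Sf_zero]
    · intro hk
      have hk1 : 1 ≤ K0 p m j := by omega
      have hs1 : Sf p 1 ≤ Sf p (K0 p m j) := Sf_mono p hk1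
      have hp1 := hp3 1 le_rfl (by omega)
      have hSone := Sf_one p
      have hgap' := hgap (K0 p m j + 1) (by omega) (by omega)
      have hgap'' : 2 * Sf p (K0 p m j) + 3 ≤ p (K0 p m j + 1) := by
        have e : K0 p m j + 1 - 1 = K0 p m j := by omega
        rw [e] at hgap'; exact hgap'
      refine ⟨by omega, hgap'', ?_⟩
      intro h3
      have hdvd : (3:ℕ) ∣ p (K0 p m j + 1) := Nat.dvd_of_mod_eq_zero h3
      have := (Nat.prime_dvd_prime_iff_eq Nat.prime_three hP.1).mp hdvd
      omega
  -- parity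
  have hOodd : ∀ j, j < n → OB p m j % 2 = 1 := fun j hj => colO_odd (hfacts j hj).1
  have hEeven : ∀ j, j < n → EB p m j % 2 = 0 := fun j hj => colE_even (hfacts j hj).1
  have hOrange : ∀ j, j < n → 2 * Sf p (K0 p m j) + 1 ≤ OB p m j ∧
      OB p m j ≤ 2 * Sf p (K0 p m j) + 2 * p (K0 p m j + 1) :=
    fun j hj => colO_range (hfacts j hj).1
  have hErange : ∀ j, j < n → 2 * Sf p (K0 p m j) + 1 ≤ EB p m j ∧
      EB p m j ≤ 2 * Sf p (K0 p m j) + 2 * p (K0 p m j + 1) :=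
    fun j hj => colE_range (hfacts j hj).1
  -- cross-block monotonicity
  have hcross : ∀ j j', j < n → j' < n → K0 p m j < K0 p m j' →
      2 * Sf p (K0 p m j) + 2 * p (K0 p m j + 1) ≤ 2 * Sf p (K0 p m j') := by
    intro j j' hj hj' hlt
    have hsucc := Sf_succ p (K0 p m j)
    have := Sf_mono p (show K0 p m j + 1 ≤ K0 p m j' by omega)
    omega
  -- injectivity of OB / EB
  have hOinj : ∀ j j', j < n → j' < n → OB p m j = OB p m j' → j = j' := by
    intro j j' hj hj' heq
    rcases lt_trichotomy (K0 p m j) (K0 p m j') with h | h | h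
    · have := hcross j j' hj hj' h
      have r1 := (hOrange j hj).2
      have r2 := (hOrange j' hj').1
      omega
    · have f1 := (hfacts j hj).1
      have f2 := (hfacts j' hj').1
      rw [← h] at f2
      unfold OB at heq
      rw [← h] at heq
      exact colO_inj f1 f2 heq
    · have := hcross j' j hj' hj h
      have r1 := (hOrange j' hj').2
      have r2 := (hOrange j hj).1
      omega
  have hEinj : ∀ j j', j < n → j' < n → EB p m j = EB p m j' → j = j' := by
    intro j j' hj hj' heq
    rcases lt_trichotomy (K0 p m j) (K0 p m j') with h | h | h
    · have := hcross j j' hj hj' h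
      have r1 := (hErange j hj).2
      have r2 := (hErange j' hj').1
      omega
    · have f1 := (hfacts j hj).1
      have f2 := (hfacts j' hj').1
      rw [← h] at f2
      unfold EB at heq
      rw [← h] at heq
      exact colE_inj f1 f2 heq
    · have := hcross j' j hj' hj h
      have r1 := (hErange j' hj').2
      have r2 := (hErange j hj).1
      omega
  -- vertical coprimality
  have hvert : ∀ j, j < n → Nat.Coprime (OB p m j) (EB p m j) :=
    fun j hj => colVert (hfacts j hj).2.1 (hfacts j hj).1
  -- horizontal coprimality
  have hkey : ∀ j, j + 1 < n →
      Nat.Coprime (OB p m j) (EB p m (j+1)) ∧ Nat.Coprime (EB p m j) (OB p m (j+1)) := by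
    intro j hj1
    have hj : j < n := by omega
    obtain ⟨⟨f1, f2, f3, f4, f5, f6⟩, hPp, hle⟩ := hfacts j hj
    have hsucc := Sf_succ p (K0 p m j)
    have hub := K0_ub p m hsum hj
    rcases Nat.lt_or_ge (j+1) (Sf p (K0 p m j + 1)) with hcase | hcase
    · -- same block
      have hkk : K0 p m (j+1) = K0 p m j :=
        K0_eq p m (K0_le p m j) (by omega) hcase
      have g := (hfacts (j+1) hj1).1
      rw [hkk] at g
      constructor
      · have := colHoriz1 hPp ⟨f1, f2, f3, f4, f5, f6⟩ g
        unfold OB EB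
        rw [hkk]
        exact this
      · have := colHoriz2 hPp ⟨f1, f2, f3, f4, f5, f6⟩ g
        unfold OB EB
        rw [hkk]
        exact this
    · -- junction between blocks
      have hj1e : j + 1 = Sf p (K0 p m j + 1) := by omega
      have hk1m : K0 p m j + 1 < m := by
        rcases Nat.lt_or_ge (K0 p m j + 1) m with h | h
        · exact h
        · have hklt := K0_lt p m hsum hj
          have : K0 p m j + 1 = m := by omega
          rw [this, hsum] at hj1e
          omega
      have h2succ := Sf_succ p (K0 p m j + 1)
      have hp2 := hp3 (K0 p m j + 1 + 1) (by omega) (by omega)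
      have hkk : K0 p m (j+1) = K0 p m j + 1 := by
        refine K0_eq p m (by omega) (by omega) ?_
        rw [h2succ]
        omega
      obtain ⟨g, hPp', hle'⟩ := hfacts (j+1) hj1
      rw [hkk] at g hPp' hle'
      obtain ⟨g1, g2, g3, g4, g5, g6⟩ := g
      obtain ⟨gs3, ggap, g3P⟩ := g6 (by omega)
      -- values at the junction
      have hOj1 : OB p m (j+1) = 2 * Sf p (K0 p m j + 1) + 1 := by
        unfold OB
        rw [hkk]
        simp only [colO, colOdd]
        split_ifs <;> first | omega | exact (‹False›).elim
      have hEj1 : EB p m (j+1) = 2 * Sf p (K0 p m j + 1) + p (K0 p m j + 1 + 1) + 1 := by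
        unfold EB
        rw [hkk]
        simp only [colE, colEven]
        split_ifs <;> first | omega | exact (‹False›).elim
      have hEj : EB p m j = 2 * (Sf p (K0 p m j) + p (K0 p m j + 1)) := by
        by_cases hk : K0 p m j = 0
        · have hs := f5 hk
          unfold EB
          simp only [colE, colEven]
          split_ifs <;> first | omega | exact (‹False›).elim
        · obtain ⟨fs3, fgap, f3P⟩ := f6 hk
          unfold EB
          simp only [colE, colEven]
          split_ifs <;> first | omega | exact (‹False›).elim
      constructor
      · by_cases hk : K0 p m j = 0
        · have hs := f5 hk
          have hOj : OB p m j = 1 := by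
            unfold OB
            simp only [colO, colOdd, if_pos hk]
            split_ifs <;> first | omega | exact (‹False›).elim
          rw [hOj]
          exact Nat.coprime_one_left _
        · obtain ⟨fs3, fgap, f3P⟩ := f6 hk
          have hOj : OB p m j = 2 * Sf p (K0 p m j) + p (K0 p m j + 1) := by
            unfold OB
            simp only [colO, colOdd, if_neg hk]
            split_ifs <;> first | omega | exact (‹False›).elim
          rw [hOj, hEj1]
          have hs := hstrong (K0 p m j + 2) (by omega) (by omega)
          have e1 : sigmaCP p (K0 p m j + 2) = 2 * Sf p (K0 p m j) + p (K0 p m j + 1) := by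
            have e : K0 p m j + 2 - 2 = K0 p m j := by omega
            have e' : K0 p m j + 2 - 1 = K0 p m j + 1 := by omega
            simp only [sigmaCP, e, e']
            rfl
          have e2 : tauCP p (K0 p m j + 2) =
              2 * Sf p (K0 p m j + 1) + p (K0 p m j + 1 + 1) + 1 := by
            have e' : K0 p m j + 2 - 1 = K0 p m j + 1 := by omega
            simp only [tauCP, e']
            rfl
          rw [e1, e2] at hs
          exact hs
      · rw [hEj, hOj1]
        apply copLin
        omega
  -- the labeling function
  set L : Fin 2 × Fin n → ℕ := fun v =>
    if (v.1 : ℕ) = (v.2 : ℕ) % 2 then OB p m (v.2 : ℕ) else EB p m (v.2 : ℕ) with hL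
  have hL1 : ∀ v, 1 ≤ L v ∧ L v ≤ 2 * n := by
    rintro ⟨r, j⟩
    have hj : (j : ℕ) < n := j.isLt
    have h1 := hOrange (j : ℕ) hj
    have h2 := hErange (j : ℕ) hj
    have h3 := (hfacts (j : ℕ) hj).2.2
    simp only [hL]
    split_ifs <;> omega
  have hLinj : Function.Injective L := by
    rintro ⟨r, j⟩ ⟨r', j'⟩ h
    have hj : (j : ℕ) < n := j.isLt
    have hj' : (j' : ℕ) < n := j'.isLt
    simp only [hL] at h
    have hr2 : (r : ℕ) < 2 := r.isLt
    have hr2' : (r' : ℕ) < 2 := r'.isLt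
    split_ifs at h with h1 h2 h2
    · have hjj := hOinj _ _ hj hj' h
      have : r = r' := Fin.ext (by omega)
      exact Prod.ext this (Fin.ext hjj)
    · have := hOodd _ hj
      have := hEeven _ hj'
      omega
    · have := hEeven _ hj
      have := hOodd _ hj'
      omega
    · have hjj := hEinj _ _ hj hj' h
      have : r = r' := Fin.ext (by omega)
      exact Prod.ext this (Fin.ext hjj)
  set F : Fin 2 × Fin n → Fin (2 * n) := fun v =>
    ⟨L v - 1, by have := hL1 v; omega⟩ with hF
  have hFinj : Function.Injective F := by
    intro u v h
    apply hLinj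
    have h1 := hL1 u
    have h2 := hL1 v
    have := congrArg Fin.val h
    simp only [hF] at this
    omega
  have hbij : Function.Bijective F :=
    (Fintype.bijective_iff_injective_and_card F).mpr ⟨hFinj, by simp⟩
  refine ⟨Equiv.ofBijective F hbij, ?_⟩
  have hval : ∀ w, ((Equiv.ofBijective F hbij) w : ℕ) + 1 = L w := by
    intro w
    have h1 := hL1 w
    have : ((Equiv.ofBijective F hbij) w : ℕ) = L w - 1 := rfl
    omega
  intro u v hadj
  rw [hval u, hval v]
  -- a step lemma for horizontal edges
  have hstep : ∀ (r : Fin 2) (a b : Fin n), (a : ℕ) + 1 = (b : ℕ) →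
      Nat.Coprime (L (r, a)) (L (r, b)) := by
    intro r a b hab
    have hb : (b : ℕ) < n := b.isLt
    have hk := hkey (a : ℕ) (by omega)
    simp only [hL]
    by_cases hr : (r : ℕ) = (a : ℕ) % 2
    · rw [if_pos hr, if_neg (by omega)]
      have := hk.1
      rw [hab] at this
      exact this
    · rw [if_neg hr, if_pos (by omega)]
      have := hk.2
      rw [hab] at this
      exact this
  rcases hadj with ⟨hrr, hjj⟩ | ⟨hjj, hrr⟩
  · -- horizontal edge
    obtain ⟨r, a⟩ := u
    obtain ⟨r', b⟩ := v
    simp only at hrr hjj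
    subst hrr
    rcases hjj with hab | hab
    · exact hstep r a b hab
    · exact (hstep r b a hab).symm
  · -- vertical edge
    obtain ⟨r, a⟩ := u
    obtain ⟨r', b⟩ := v
    simp only at hrr hjj
    subst hjj
    have ha : (a : ℕ) < n := a.isLt
    have hv := hvert (a : ℕ) ha
    have hr2 : (r : ℕ) < 2 := r.isLt
    have hr2' : (r' : ℕ) < 2 := r'.isLt
    have hne : (r : ℕ) ≠ (r' : ℕ) := fun h => hrr (Fin.ext h)
    simp only [hL]
    by_cases hr : (r : ℕ) = (a : ℕ) % 2
    · rw [if_pos hr, if_neg (by omega)]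
      exact hv
    · rw [if_neg hr, if_pos (by omega)]
      exact hv.symm
end

section
/- Let p ≥ 7 be a prime and define a labeling f of the ladder P_2 × P_{2p} by f(i,j) = (i-1)p + j when 1 ≤ j ≤ p, and f(i,j) = (3-i)p + j when p+1 ≤ j ≤ 2p (for i ∈ {1,2}). Then f is a bijection onto {1, 2, ..., 4p}, and the only pairs of adjacent vertices whose labels are not coprime are the pair labeled {p, 2p} (the two vertices of column p) and the pair labeled {3p, 4p} (the two vertices of column 2p). -/
lemma copConsec (n : ℕ) : Nat.Coprime n (n + 1) :=
  Nat.coprime_self_add_right.mpr (Nat.coprime_one_right n)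

lemma copShift {p : ℕ} (hp : p.Prime) (b : ℕ) :
    Nat.Coprime (b + p) b ↔ ¬ p ∣ b := by
  rw [Nat.add_comm, Nat.coprime_add_self_left]
  exact hp.coprime_iff_not_dvd

lemma nonCop {p x y : ℕ} (hp7 : 7 ≤ p) (hx : p ∣ x) (hy : p ∣ y) :
    ¬ Nat.Coprime x y := by
  intro h
  have : p ∣ 1 := h ▸ Nat.dvd_gcd hx hy
  have := Nat.le_of_dvd one_pos this
  omega

/-- For a prime `p ≥ 7`, the labeling `f(i,j) = (i-1)p + j` for `1 ≤ j ≤ p` and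
`f(i,j) = (3-i)p + j` for `p + 1 ≤ j ≤ 2p` (here written with `0`-indexed
vertices `(i', j') ∈ Fin 2 × Fin (2p)`, corresponding to `i = i' + 1`,
`j = j' + 1`) is a bijection onto `{1, …, 4p}`, and the only pairs of adjacent
vertices with non-coprime labels are the pair labeled `{p, 2p}` and the pair
labeled `{3p, 4p}`. -/
theorem ladder_standard_labeling_bijOn_and_noncoprime_pairs
    (p : ℕ) (hp : p.Prime) (hp7 : 7 ≤ p)
    (f : Fin 2 × Fin (2 * p) → ℕ)
    (hf : ∀ u : Fin 2 × Fin (2 * p), f u =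
      if (u.2 : ℕ) + 1 ≤ p then (u.1 : ℕ) * p + ((u.2 : ℕ) + 1)
      else (2 - (u.1 : ℕ)) * p + ((u.2 : ℕ) + 1)) :
    Set.BijOn f Set.univ (Set.Icc 1 (4 * p)) ∧
    ∀ u v, (Ladder (2 * p)).Adj u v →
      (¬ Nat.Coprime (f u) (f v) ↔
        ({f u, f v} : Set ℕ) = {p, 2 * p} ∨
        ({f u, f v} : Set ℕ) = {3 * p, 4 * p}) := by
  have hp2 := hp.two_le
  constructor
  · refine ⟨?_, ?_, ?_⟩
    · rintro ⟨⟨a, ha⟩, ⟨b, hb⟩⟩ -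
      rw [hf]
      simp only [Set.mem_Icc]
      split <;> (interval_cases a <;> omega)
    · rintro ⟨⟨a, ha⟩, ⟨b, hb⟩⟩ - ⟨⟨c, hc⟩, ⟨d, hd⟩⟩ - h
      rw [hf, hf] at h
      dsimp only at h
      have hac : a = c ∧ b = d := by
        split at h <;> split at h <;> (interval_cases a <;> interval_cases c <;> omega)
      simp [Prod.ext_iff, Fin.ext_iff, hac.1, hac.2]
    · intro m hm
      simp only [Set.mem_Icc] at hm
      by_cases h1 : m ≤ p
      · refine ⟨(⟨0, by omega⟩, ⟨m - 1, by omega⟩), Set.mem_univ _, ?_⟩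
        rw [hf]; dsimp only; split <;> omega
      · by_cases h2 : m ≤ 3 * p
        · refine ⟨(⟨1, by omega⟩, ⟨m - p - 1, by omega⟩), Set.mem_univ _, ?_⟩
          rw [hf]; dsimp only; split <;> omega
        · refine ⟨(⟨0, by omega⟩, ⟨m - 2 * p - 1, by omega⟩), Set.mem_univ _, ?_⟩
          rw [hf]; dsimp only; split <;> omega
  · -- adjacency part
    have keyH : ∀ w z : Fin 2 × Fin (2 * p), w.1 = z.1 → (w.2 : ℕ) + 1 = (z.2 : ℕ) →
        Nat.Coprime (f w) (f z) ∧ ({f w, f z} : Set ℕ) ≠ {p, 2 * p} ∧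
          ({f w, f z} : Set ℕ) ≠ {3 * p, 4 * p} := by
      rintro ⟨⟨a, ha⟩, ⟨b, hb⟩⟩ ⟨⟨c, hc⟩, ⟨d, hd⟩⟩ h1 h2
      rw [hf, hf]
      dsimp only at h1 h2 ⊢
      have hac : a = c := by simpa [Fin.ext_iff] using h1
      subst hac
      have hd' : d = b + 1 := by omega
      subst hd'
      constructor
      · -- coprime
        split <;> split <;> rename_i h3 h4
        · have : a * p + (b + 1 + 1) = a * p + (b + 1) + 1 := by ring
          rw [this]; exact copConsec _
        · -- b + 1 = p boundary
          have hbp : b + 1 = p := by omega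
          interval_cases a
          · -- labels p and 3p+1
            have e1 : 0 * p + (b + 1) = p := by omega
            have e2 : (2 - 0) * p + (b + 1 + 1) = 1 + p * 3 := by omega
            rw [e1, e2, Nat.coprime_add_mul_left_right]
            exact Nat.coprime_one_right p
          · have e1 : 1 * p + (b + 1) = 2 * p := by omega
            have e2 : (2 - 1) * p + (b + 1 + 1) = 2 * p + 1 := by omega
            rw [e1, e2]; exact copConsec _
        · omega
        · have : (2 - a) * p + (b + 1 + 1) = (2 - a) * p + (b + 1) + 1 := by ring
          rw [this]; exact copConsec _
      · -- the two pair inequalities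
        constructor <;>
          (intro hEq; rw [Set.pair_eq_pair_iff] at hEq;
           split at hEq <;> split at hEq <;> interval_cases a <;> omega)
    have keyV : ∀ w z : Fin 2 × Fin (2 * p), (w.1 : ℕ) = 0 → (z.1 : ℕ) = 1 →
        (w.2 : ℕ) = (z.2 : ℕ) →
        (¬ Nat.Coprime (f w) (f z) ↔
          ({f w, f z} : Set ℕ) = {p, 2 * p} ∨ ({f w, f z} : Set ℕ) = {3 * p, 4 * p}) := by
      rintro ⟨⟨a, ha⟩, ⟨b, hb⟩⟩ ⟨⟨c, hc⟩, ⟨d, hd⟩⟩ h1 h2 h3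
      rw [hf, hf]
      dsimp only at h1 h2 h3 ⊢
      subst h1; subst h2
      subst h3
      have e2 : (if b + 1 ≤ p then 1 * p + (b + 1) else (2 - 1) * p + (b + 1)) = p + (b + 1) := by
        split <;> omega
      rw [e2]
      by_cases h4 : b + 1 ≤ p
      · rw [if_pos h4]
        have e1 : 0 * p + (b + 1) = b + 1 := by omega
        rw [e1]
        by_cases h5 : b + 1 = p
        · rw [h5]
          have e3 : p + p = 2 * p := by omega
          rw [e3]
          constructor
          · intro _; exact Or.inl rfl
          · intro _; exact nonCop hp7 dvd_rfl ⟨2, by ring⟩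
        · have hcop : Nat.Coprime (b + 1) (p + (b + 1)) := by
            rw [Nat.coprime_comm]
            have : p + (b + 1) = (b + 1) + p := by ring
            rw [this, copShift hp]
            intro hdvd
            have := Nat.le_of_dvd (by omega) hdvd
            omega
          constructor
          · intro h; exact absurd hcop h
          · rintro (hEq | hEq) <;> (rw [Set.pair_eq_pair_iff] at hEq; omega)
      · rw [if_neg h4]
        have e1 : (2 - 0) * p + (b + 1) = (p + (b + 1)) + p := by omega
        rw [e1]
        by_cases h5 : b + 1 = 2 * p
        · constructor
          · intro _
            refine Or.inr ?_
            have : ({(p + (b + 1)) + p, p + (b + 1)} : Set ℕ) = {4 * p, 3 * p} := by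
              rw [Set.pair_eq_pair_iff]; omega
            rw [this, Set.pair_comm]
          · intro _
            exact nonCop hp7 ⟨4, by omega⟩ ⟨3, by omega⟩
        · have hcop : Nat.Coprime ((p + (b + 1)) + p) (p + (b + 1)) := by
            rw [copShift hp]
            rintro ⟨k, hk⟩
            rcases Nat.lt_or_ge k 2 with hk2 | hk2
            · interval_cases k <;> omega
            · rcases Nat.lt_or_ge k 4 with hk4 | hk4
              · interval_cases k <;> omega
              · have h4p : p * 4 ≤ p * k := Nat.mul_le_mul_left p hk4
                omega
          constructor
          · intro h; exact absurd hcop h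
          · rintro (hEq | hEq) <;> (rw [Set.pair_eq_pair_iff] at hEq; omega)
    intro u v hadj
    rcases hadj with ⟨h1, h2 | h2⟩ | ⟨h1, h2⟩
    · obtain ⟨hc, hn1, hn2⟩ := keyH u v h1 h2
      constructor
      · intro h; exact absurd hc h
      · rintro (hEq | hEq); exacts [absurd hEq hn1, absurd hEq hn2]
    · obtain ⟨hc, hn1, hn2⟩ := keyH v u h1.symm h2
      rw [Nat.coprime_comm, Set.pair_comm]
      constructor
      · intro h; exact absurd hc h
      · rintro (hEq | hEq); exacts [absurd hEq hn1, absurd hEq hn2]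
    · -- vertical
      have hu := u.1.isLt
      have hv := v.1.isLt
      have hne : (u.1 : ℕ) ≠ (v.1 : ℕ) := fun h => h2 (Fin.ext h)
      rcases Nat.lt_or_ge (u.1 : ℕ) 1 with h3 | h3
      · exact keyV u v (by omega) (by omega) (by rw [h1])
      · rw [Nat.coprime_comm, Set.pair_comm]
        exact keyV v u (by omega) (by omega) (by rw [h1])
end
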